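/- arXiv:1411.6935 — 11 statements merged into one kernel-verified Lean document; each statement's English description precedes it below -/
import Mathlib

section
/- Let A be a real symmetric n×n matrix. Then A has a repeated eigenvalue (its characteristic polynomial has a root of multiplicity at least 2, equivalently some eigenspace has dimension at least 2) if and only if there exists a nonzero real antisymmetric n×n matrix R such that A*R = R*A. (Lemma 1.4, Lax's criterion for degeneracy.) -/
open Matrix Polynomial

variable {n : ℕ}

lemma charpoly_conj_aux (U V M : Matrix (Fin n) (Fin n) ℝ) (h1 : U * V = 1) :
    (U * M * V).charpoly = M.charpoly := by
  have hUV : U.map C * V.map C = 1 := by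
    rw [← Matrix.map_mul, h1, Matrix.map_one _ (map_zero C) (map_one C)]
  have hm : charmatrix (U * M * V) = U.map C * charmatrix M * V.map C := by
    rw [charmatrix, charmatrix, RingHom.mapMatrix_apply, RingHom.mapMatrix_apply,
      mul_sub, sub_mul, ← Matrix.map_mul, ← Matrix.map_mul]
    congr 1
    rw [← (Matrix.scalar_commute (X : ℝ[X]) (fun r => Commute.all _ _) (U.map C)).eq,
      mul_assoc, hUV, mul_one]
  rw [Matrix.charpoly, Matrix.charpoly, hm]
  have h2 : (U.map C).det * (V.map C).det = 1 := by rw [← det_mul, hUV, det_one]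
  rw [det_mul, det_mul, mul_right_comm, h2, one_mul]

lemma charpoly_diagonal_aux (d : Fin n → ℝ) :
    (Matrix.diagonal d).charpoly = ∏ i, (X - C (d i)) := by
  rw [Matrix.charpoly]
  have : charmatrix (Matrix.diagonal d) = Matrix.diagonal fun i => X - C (d i) := by
    ext i j
    by_cases h : i = j
    · subst h; simp [charmatrix_apply_eq]
    · simp [charmatrix_apply_ne _ _ _ h, Matrix.diagonal_apply_ne _ h, Matrix.diagonal_apply_ne' d h]
  rw [this, det_diagonal]

lemma rootMult_pair (d : Fin n → ℝ) :
    (∃ μ : ℝ, 2 ≤ (∏ i, (X - C (d i))).rootMultiplicity μ) ↔ ∃ i j, i ≠ j ∧ d i = d j := by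
  have hroots : (∏ i, (X - C (d i))).roots = Finset.univ.val.map d := by
    rw [← Polynomial.roots_multiset_prod_X_sub_C (Finset.univ.val.map d)]
    congr 1
    rw [Multiset.map_map, Finset.prod_eq_multiset_prod]
    rfl
  have hcount : ∀ μ : ℝ, (∏ i, (X - C (d i))).rootMultiplicity μ
      = (Finset.univ.filter fun a => μ = d a).card := by
    intro μ
    rw [← Polynomial.count_roots, hroots, Multiset.count_map]
    rfl
  constructor
  · rintro ⟨μ, hμ⟩
    rw [hcount] at hμ
    obtain ⟨a, ha, b, hb, hab⟩ := Finset.one_lt_card.mp hμ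
    exact ⟨a, b, hab, ((Finset.mem_filter.mp ha).2.symm).trans (Finset.mem_filter.mp hb).2⟩
  · rintro ⟨i, j, hij, hd⟩
    refine ⟨d i, ?_⟩
    rw [hcount, Nat.succ_le_iff, Finset.one_lt_card]
    exact ⟨i, by simp, j, by simp [hd], hij⟩

/-- Lax's criterion: a real symmetric matrix has a repeated eigenvalue iff it
commutes with a nonzero real antisymmetric matrix. -/
theorem lax_criterion {n : ℕ} (A : Matrix (Fin n) (Fin n) ℝ) (hA : A.transpose = A) :
    (∃ μ : ℝ, 2 ≤ A.charpoly.rootMultiplicity μ) ↔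
      ∃ R : Matrix (Fin n) (Fin n) ℝ, R ≠ 0 ∧ R.transpose = -R ∧ A * R = R * A := by
  have hH : A.IsHermitian := by
    rwa [Matrix.IsHermitian, Matrix.conjTranspose_eq_transpose_of_trivial]
  set U : Matrix (Fin n) (Fin n) ℝ := (hH.eigenvectorUnitary : Matrix (Fin n) (Fin n) ℝ) with hUdef
  set d : Fin n → ℝ := hH.eigenvalues with hddef
  have hspec : A = U * Matrix.diagonal d * U.transpose := by
    have h := hH.spectral_theorem
    rwa [Unitary.conjStarAlgAut_apply, Matrix.star_eq_conjTranspose,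
      Matrix.conjTranspose_eq_transpose_of_trivial] at h
  have hU1 : U.transpose * U = 1 := by
    have := Matrix.mem_unitaryGroup_iff'.mp hH.eigenvectorUnitary.2
    rwa [Matrix.star_eq_conjTranspose, Matrix.conjTranspose_eq_transpose_of_trivial] at this
  have hU2 : U * U.transpose = 1 := by
    have := Matrix.mem_unitaryGroup_iff.mp hH.eigenvectorUnitary.2
    rwa [Matrix.star_eq_conjTranspose, Matrix.conjTranspose_eq_transpose_of_trivial] at this
  have cancel1 : ∀ X : Matrix (Fin n) (Fin n) ℝ, U.transpose * (U * X) = X := fun X => by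
    rw [← Matrix.mul_assoc, hU1, Matrix.one_mul]
  have cancel2 : ∀ X : Matrix (Fin n) (Fin n) ℝ, U * (U.transpose * X) = X := fun X => by
    rw [← Matrix.mul_assoc, hU2, Matrix.one_mul]
  have hcp : A.charpoly = (Matrix.diagonal d).charpoly := by
    rw [hspec]; exact charpoly_conj_aux U U.transpose _ hU2
  rw [hcp, charpoly_diagonal_aux, rootMult_pair]
  constructor
  · rintro ⟨i, j, hij, hd⟩
    set S : Matrix (Fin n) (Fin n) ℝ :=
      Matrix.single i j 1 - Matrix.single j i 1 with hSdef
    have hSij : S i j = 1 := by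
      simp [hSdef, Matrix.single, Ne.symm hij]
    have hSt : S.transpose = -S := by
      ext a b
      simp only [hSdef, Matrix.transpose_apply, Matrix.sub_apply, Matrix.neg_apply,
        Matrix.single, Matrix.of_apply]
      simp only [and_comm, neg_sub]
    have hDS : Matrix.diagonal d * S = S * Matrix.diagonal d := by
      ext a b
      rw [Matrix.diagonal_mul, Matrix.mul_diagonal]
      rcases eq_or_ne (d a) (d b) with h | h
      · rw [h, mul_comm]
      · have h1 : ¬(i = a ∧ j = b) := fun ⟨e1, e2⟩ => h (e1 ▸ e2 ▸ hd)
        have h2 : ¬(j = a ∧ i = b) := fun ⟨e1, e2⟩ => h (e1 ▸ e2 ▸ hd.symm)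
        have : S a b = 0 := by simp [hSdef, Matrix.single, h1, h2]
        rw [this, mul_zero, zero_mul]
    refine ⟨U * S * U.transpose, ?_, ?_, ?_⟩
    · intro h0
      have hUSU : U.transpose * (U * S * U.transpose) * U = S := by
        simp only [Matrix.mul_assoc, cancel1, hU1, Matrix.mul_one]
      have hS0 : S = 0 := by rw [← hUSU, h0, Matrix.mul_zero, Matrix.zero_mul]
      rw [hS0] at hSij
      simp at hSij
    · rw [Matrix.transpose_mul, Matrix.transpose_mul, Matrix.transpose_transpose, hSt]
      simp [Matrix.neg_mul, Matrix.mul_neg, Matrix.mul_assoc]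
    · rw [hspec]
      simp only [Matrix.mul_assoc, cancel1]
      rw [← Matrix.mul_assoc (Matrix.diagonal d), ← Matrix.mul_assoc S, hDS]
  · rintro ⟨R, hR0, hRt, hcomm⟩
    by_contra hno
    push_neg at hno
    set S : Matrix (Fin n) (Fin n) ℝ := U.transpose * R * U with hSdef
    have hDS : Matrix.diagonal d * S = S * Matrix.diagonal d := by
      have e1 : Matrix.diagonal d * S = U.transpose * (A * R) * U := by
        rw [hspec, hSdef]
        simp only [Matrix.mul_assoc, cancel1]
      have e2 : S * Matrix.diagonal d = U.transpose * (R * A) * U := by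
        rw [hspec, hSdef]
        simp only [Matrix.mul_assoc, cancel1, cancel2, hU1, Matrix.mul_one]
      rw [e1, e2, hcomm]
    have hSt : S.transpose = -S := by
      rw [hSdef, Matrix.transpose_mul, Matrix.transpose_mul, Matrix.transpose_transpose, hRt]
      simp [Matrix.mul_assoc, Matrix.neg_mul, Matrix.mul_neg]
    have hS0 : S = 0 := by
      ext a b
      rcases eq_or_ne a b with rfl | hab
      · have := congrFun (congrFun hSt a) a
        simp only [Matrix.transpose_apply, Matrix.neg_apply] at this
        have : S a a = 0 := by linarith
        simpa using this
      · have := congrFun (congrFun hDS a) b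
        rw [Matrix.diagonal_mul, Matrix.mul_diagonal] at this
        have hd : d a ≠ d b := hno a b hab
        have : (d a - d b) * S a b = 0 := by ring_nf; linarith [this]
        rcases mul_eq_zero.mp this with h | h
        · exact absurd (by linarith : d a = d b) hd
        · simpa using h
    apply hR0
    have : R = U * S * U.transpose := by
      rw [hSdef]
      simp only [Matrix.mul_assoc, cancel2, hU2, Matrix.mul_one]
    rw [this, hS0, Matrix.mul_zero, Matrix.zero_mul]
end

section
/- Let B be the real symmetric 3×3 matrix with entries B₁₁ = u, B₂₂ = v, B₃₃ = w, B₁₂ = B₂₁ = z, B₁₃ = B₃₁ = y, B₂₃ = B₃₂ = x. Assume that at most one of the three off-diagonal coefficients x, y, z is equal to zero. Then there exists a nonzero real antisymmetric 3×3 matrix R with B*R = R*B (equivalently, B has a repeated eigenvalue) if and only if the three equations x(y² − z²) + (v − w)yz = 0, y(z² − x²) + (w − u)zx = 0, and z(x² − y²) + (u − v)xy = 0 all hold. -/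
/-- Degeneracy of a symmetric 3×3 matrix when at most one off-diagonal entry vanishes:
the equations (C₂). -/
theorem degeneracy_C2 (u v w x y z : ℝ)
    (h : ¬(x = 0 ∧ y = 0) ∧ ¬(y = 0 ∧ z = 0) ∧ ¬(x = 0 ∧ z = 0)) :
    (∃ R : Matrix (Fin 3) (Fin 3) ℝ, R ≠ 0 ∧ R.transpose = -R ∧
        !![u, z, y; z, v, x; y, x, w] * R = R * !![u, z, y; z, v, x; y, x, w]) ↔
      (x * (y ^ 2 - z ^ 2) + (v - w) * (y * z) = 0 ∧
       y * (z ^ 2 - x ^ 2) + (w - u) * (z * x) = 0 ∧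
       z * (x ^ 2 - y ^ 2) + (u - v) * (x * y) = 0) := by
  obtain ⟨hxy, hyz, hxz⟩ := h
  constructor
  · rintro ⟨R, hR0, hT, hC⟩
    have e : ∀ i j : Fin 3, R j i = - R i j := by
      intro i j
      have := congrFun (congrFun hT i) j
      simpa using this
    have e00 : R 0 0 = 0 := by have := e 0 0; linarith
    have e11 : R 1 1 = 0 := by have := e 1 1; linarith
    have e22 : R 2 2 = 0 := by have := e 2 2; linarith
    have e10 : R 1 0 = - R 0 1 := e 0 1
    have e20 : R 2 0 = - R 0 2 := e 0 2
    have e21 : R 2 1 = - R 1 2 := e 1 2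
    have q00 := congrFun (congrFun hC 0) 0
    have q11 := congrFun (congrFun hC 1) 1
    have q01 := congrFun (congrFun hC 0) 1
    have q02 := congrFun (congrFun hC 0) 2
    have q12 := congrFun (congrFun hC 1) 2
    simp [Matrix.mul_apply, Fin.sum_univ_three, e00, e11, e22, e10, e20, e21] at q00 q11 q01 q02 q12
    have E1 : y * R 0 2 + z * R 0 1 = 0 := by linear_combination (-1/2 : ℝ) * q00
    have E2 : z * R 0 1 - x * R 1 2 = 0 := by linear_combination (1/2 : ℝ) * q11
    have E3 : (u - v) * R 0 1 - x * R 0 2 - R 1 2 * y = 0 := by linear_combination q01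
    have E4 : (w - u) * R 0 2 - R 1 2 * z + R 0 1 * x = 0 := by linear_combination -q02
    have E5 : (v - w) * R 1 2 + y * R 0 1 + z * R 0 2 = 0 := by linear_combination q12
    have hRnz : ¬ (R 1 2 = 0 ∧ R 0 1 = 0 ∧ R 0 2 = 0) := by
      rintro ⟨h1, h2, h3⟩
      apply hR0
      have hall : ∀ i j : Fin 3, R i j = 0 := by
        intro i j
        fin_cases i <;> fin_cases j <;>
          simp [e00, e11, e22, e10, e20, e21, h1, h2, h3]
      ext i j
      simp [hall]
    by_cases hx : x = 0
    · exfalso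
      have hy : y ≠ 0 := fun hy => hxy ⟨hx, hy⟩
      have hz : z ≠ 0 := fun hz => hxz ⟨hx, hz⟩
      have hc0 : R 0 1 = 0 := by
        have : z * R 0 1 = 0 := by rw [hx] at E2; linarith
        rcases mul_eq_zero.1 this with h' | h' <;> [exact absurd h' hz; exact h']
      have hd0 : R 0 2 = 0 := by
        have : y * R 0 2 = 0 := by rw [hc0] at E1; linarith
        rcases mul_eq_zero.1 this with h' | h' <;> [exact absurd h' hy; exact h']
      have ha0 : R 1 2 = 0 := by
        have : R 1 2 * z = 0 := by rw [hx, hd0, hc0] at E4; linarith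
        rcases mul_eq_zero.1 this with h' | h' <;> [exact h'; exact absurd h' hz]
      exact hRnz ⟨ha0, hc0, hd0⟩
    by_cases hy : y = 0
    · exfalso
      have hz : z ≠ 0 := fun hz => hyz ⟨hy, hz⟩
      have hc0 : R 0 1 = 0 := by
        have : z * R 0 1 = 0 := by rw [hy] at E1; linarith
        rcases mul_eq_zero.1 this with h' | h' <;> [exact absurd h' hz; exact h']
      have ha0 : R 1 2 = 0 := by
        have : x * R 1 2 = 0 := by rw [hc0] at E2; linarith
        rcases mul_eq_zero.1 this with h' | h' <;> [exact absurd h' hx; exact h']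
      have hd0 : R 0 2 = 0 := by
        have : x * R 0 2 = 0 := by rw [hy, hc0, ha0] at E3; linarith
        rcases mul_eq_zero.1 this with h' | h' <;> [exact absurd h' hx; exact h']
      exact hRnz ⟨ha0, hc0, hd0⟩
    by_cases hz : z = 0
    · exfalso
      have ha0 : R 1 2 = 0 := by
        have : x * R 1 2 = 0 := by rw [hz] at E2; linarith
        rcases mul_eq_zero.1 this with h' | h' <;> [exact absurd h' hx; exact h']
      have hd0 : R 0 2 = 0 := by
        have : y * R 0 2 = 0 := by rw [hz] at E1; linarith
        rcases mul_eq_zero.1 this with h' | h' <;> [exact absurd h' hy; exact h']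
      have hc0 : R 0 1 = 0 := by
        have : y * R 0 1 = 0 := by rw [hz, ha0, hd0] at E5; linarith
        rcases mul_eq_zero.1 this with h' | h' <;> [exact absurd h' hy; exact h']
      exact hRnz ⟨ha0, hc0, hd0⟩
    -- all of x, y, z nonzero
    have ha0 : R 1 2 ≠ 0 := by
      intro h'
      apply hRnz
      have hc0 : R 0 1 = 0 := by
        have : z * R 0 1 = 0 := by rw [h'] at E2; linarith
        rcases mul_eq_zero.1 this with h'' | h'' <;> [exact absurd h'' hz; exact h'']
      have hd0 : R 0 2 = 0 := by
        have : y * R 0 2 = 0 := by rw [hc0] at E1; linarith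
        rcases mul_eq_zero.1 this with h'' | h'' <;> [exact absurd h'' hy; exact h'']
      exact ⟨h', hc0, hd0⟩
    have hc0 : R 0 1 ≠ 0 := by
      intro h'
      have : x * R 1 2 = 0 := by rw [h'] at E2; linarith
      rcases mul_eq_zero.1 this with h'' | h'' <;> [exact absurd h'' hx; exact absurd h'' ha0]
    have hd0 : R 0 2 ≠ 0 := by
      intro h'
      have : z * R 0 1 = 0 := by rw [h'] at E1; linarith
      rcases mul_eq_zero.1 this with h'' | h'' <;> [exact absurd h'' hz; exact absurd h'' hc0]
    refine ⟨?_, ?_, ?_⟩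
    · have key : R 1 2 * (x * (y ^ 2 - z ^ 2) + (v - w) * (y * z)) = 0 := by
        linear_combination (y * z) * E5 - y ^ 2 * E2 + z ^ 2 * E2 - z ^ 2 * E1
      rcases mul_eq_zero.1 key with h' | h' <;> [exact absurd h' ha0; exact h']
    · have key : R 0 2 * (y * (z ^ 2 - x ^ 2) + (w - u) * (z * x)) = 0 := by
        linear_combination (z * x) * E4 + (z ^ 2 - x ^ 2) * E1 - z ^ 2 * E2
      rcases mul_eq_zero.1 key with h' | h' <;> [exact absurd h' hd0; exact h']
    · have key : R 0 1 * (z * (x ^ 2 - y ^ 2) + (u - v) * (x * y)) = 0 := by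
        linear_combination (x * y) * E3 + x ^ 2 * E1 - y ^ 2 * E2
      rcases mul_eq_zero.1 key with h' | h' <;> [exact absurd h' hc0; exact h']
  · rintro ⟨h1, h2, h3⟩
    by_cases hx : x = 0
    · exfalso
      have hy : y ≠ 0 := fun hy => hxy ⟨hx, hy⟩
      have hz : z ≠ 0 := fun hz => hxz ⟨hx, hz⟩
      have : y * z ^ 2 = 0 := by rw [hx] at h2; nlinarith [h2]
      rcases mul_eq_zero.1 this with h' | h'
      · exact hy h'
      · exact hz (pow_eq_zero_iff (n := 2) (by norm_num) |>.1 h')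
    by_cases hy : y = 0
    · exfalso
      have hz : z ≠ 0 := fun hz => hyz ⟨hy, hz⟩
      have : z * x ^ 2 = 0 := by rw [hy] at h3; nlinarith [h3]
      rcases mul_eq_zero.1 this with h' | h'
      · exact hz h'
      · exact hx (pow_eq_zero_iff (n := 2) (by norm_num) |>.1 h')
    by_cases hz : z = 0
    · exfalso
      have : x * y ^ 2 = 0 := by rw [hz] at h1; nlinarith [h1]
      rcases mul_eq_zero.1 this with h' | h'
      · exact hx h'
      · exact hy (pow_eq_zero_iff (n := 2) (by norm_num) |>.1 h')
    refine ⟨!![0, x * y, -(z * x); -(x * y), 0, y * z; z * x, -(y * z), 0], ?_, ?_, ?_⟩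
    · intro h0
      have := congrFun (congrFun h0 0) 1
      simp at this
      rcases this with h' | h' <;> [exact hx h'; exact hy h']
    · ext i j
      fin_cases i <;> fin_cases j <;> simp
    · ext i j
      fin_cases i <;> fin_cases j <;>
        simp [Matrix.mul_apply, Fin.sum_univ_three] <;>
        ring_nf <;> nlinarith [h1, h2, h3]
end

section
/- Let B be the real symmetric 3×3 matrix [[u, z, 0], [z, v, 0], [0, 0, w]] (i.e., with the two off-diagonal coefficients B₁₃ and B₂₃ equal to zero). Then B has a repeated eigenvalue if and only if either (z = 0 and (u − v)(v − w)(w − u) = 0) or (z ≠ 0 and z² + (v − w)(w − u) = 0). -/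
open Polynomial

/-- Degeneracy of a symmetric 3×3 matrix with two vanishing off-diagonal entries:
the equations (C₁). -/
theorem degeneracy_C1 (u v w z : ℝ) :
    (∃ μ : ℝ, 2 ≤ (Matrix.charpoly !![u, z, 0; z, v, 0; 0, 0, w]).rootMultiplicity μ) ↔
      ((z = 0 ∧ (u - v) * (v - w) * (w - u) = 0) ∨
       (z ≠ 0 ∧ z ^ 2 + (v - w) * (w - u) = 0)) := by
  set d := Real.sqrt ((u - v) ^ 2 + 4 * z ^ 2) with hd_def
  have hd0 : 0 ≤ d := Real.sqrt_nonneg _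
  have hd : d ^ 2 = (u - v) ^ 2 + 4 * z ^ 2 := Real.sq_sqrt (by positivity)
  set a := (u + v + d) / 2 with ha_def
  set b := (u + v - d) / 2 with hb_def
  have hsum : a + b = u + v := by rw [ha_def, hb_def]; ring
  have hprod : a * b = u * v - z ^ 2 := by
    rw [ha_def, hb_def]; nlinarith [hd]
  have hp : Matrix.charpoly !![u, z, 0; z, v, 0; 0, 0, w]
      = (X - C a) * (X - C b) * (X - C w) := by
    rw [Matrix.charpoly, Matrix.det_fin_three]
    apply Polynomial.funext
    intro x
    simp [Matrix.charmatrix_apply]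
    linear_combination (x - w) * hprod - x * (x - w) * hsum + (x - w) / 2 * hd
  have hne : ∀ c : ℝ, (X - C c : ℝ[X]) ≠ 0 := fun c => X_sub_C_ne_zero c
  have hr : ∀ μ : ℝ, (Matrix.charpoly !![u, z, 0; z, v, 0; 0, 0, w]).rootMultiplicity μ =
      (if μ = a then 1 else 0) + (if μ = b then 1 else 0) + (if μ = w then 1 else 0) := by
    intro μ
    rw [hp, rootMultiplicity_mul (mul_ne_zero (mul_ne_zero (hne a) (hne b)) (hne w)),
      rootMultiplicity_mul (mul_ne_zero (hne a) (hne b)),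
      rootMultiplicity_X_sub_C, rootMultiplicity_X_sub_C, rootMultiplicity_X_sub_C]
  have hex : (∃ μ : ℝ, 2 ≤ (Matrix.charpoly !![u, z, 0; z, v, 0; 0, 0, w]).rootMultiplicity μ)
      ↔ (a = b ∨ a = w ∨ b = w) := by
    constructor
    · rintro ⟨μ, hμ⟩
      rw [hr] at hμ
      split_ifs at hμ with h1 h2 h3 h3 h2 h3 h3 <;> try omega
      · exact Or.inl (h1.symm.trans h2)
      · exact Or.inl (h1.symm.trans h2)
      · exact Or.inr (Or.inl (h1.symm.trans h3))
      · exact Or.inr (Or.inr (h2.symm.trans h3))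
    · rintro (h | h | h)
      · exact ⟨a, by rw [hr, if_pos rfl, if_pos h]; split_ifs <;> omega⟩
      · exact ⟨w, by rw [hr, if_pos h.symm]; split_ifs <;> first | omega | simp_all⟩
      · exact ⟨w, by rw [hr, if_pos h.symm]; split_ifs <;> first | omega | simp_all⟩
  rw [hex]
  constructor
  · rintro (h | h | h)
    · have hdz : d = 0 := by rw [ha_def, hb_def] at h; linarith
      have hz : z = 0 := by nlinarith [hd, hdz, sq_nonneg (u - v), sq_nonneg z]
      have huv : u = v := by nlinarith [hd, hdz, sq_nonneg (u - v), sq_nonneg z]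
      exact Or.inl ⟨hz, by rw [huv]; ring⟩
    · have hq : (w - u) * (w - v) - z ^ 2 = 0 := by
        linear_combination (-(w - b)) * h + w * hsum - hprod
      by_cases hz : z = 0
      · subst hz
        refine Or.inl ⟨rfl, ?_⟩
        rcases mul_eq_zero.mp (by linear_combination hq : (w - u) * (w - v) = 0) with h' | h'
        · linear_combination (u - v) * (v - w) * h'
        · linear_combination (-(u - v)) * (w - u) * h'
      · exact Or.inr ⟨hz, by linear_combination -hq⟩
    · have hq : (w - u) * (w - v) - z ^ 2 = 0 := by
        linear_combination (-(w - a)) * h + w * hsum - hprod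
      by_cases hz : z = 0
      · subst hz
        refine Or.inl ⟨rfl, ?_⟩
        rcases mul_eq_zero.mp (by linear_combination hq : (w - u) * (w - v) = 0) with h' | h'
        · linear_combination (u - v) * (v - w) * h'
        · linear_combination (-(u - v)) * (w - u) * h'
      · exact Or.inr ⟨hz, by linear_combination -hq⟩
  · rintro (⟨hz, h0⟩ | ⟨hz, h0⟩)
    · subst hz
      rcases mul_eq_zero.mp h0 with h' | h'
      · rcases mul_eq_zero.mp h' with h'' | h''
        · have hdz : d = 0 := by
            have h2 : d ^ 2 = 0 := by rw [hd]; nlinarith [h'']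
            nlinarith [hd0, h2]
          exact Or.inl (by rw [ha_def, hb_def, hdz]; ring)
        · have hwab : (w - a) * (w - b) = 0 := by
            linear_combination (-w) * hsum + hprod - (w - u) * h''
          rcases mul_eq_zero.mp hwab with h3 | h3
          · exact Or.inr (Or.inl (by linarith))
          · exact Or.inr (Or.inr (by linarith))
      · have hwab : (w - a) * (w - b) = 0 := by
          linear_combination (-w) * hsum + hprod + (w - v) * h'
        rcases mul_eq_zero.mp hwab with h3 | h3
        · exact Or.inr (Or.inl (by linarith))
        · exact Or.inr (Or.inr (by linarith))
    · have hwab : (w - a) * (w - b) = 0 := by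
        linear_combination (-w) * hsum + hprod - h0
      rcases mul_eq_zero.mp hwab with h3 | h3
      · exact Or.inr (Or.inl (by linarith))
      · exact Or.inr (Or.inr (by linarith))
end

section
/- Let m1, m2, m3, m4 be positive real numbers and M = m1 + m2 + m3 + m4, and let B be the real symmetric 3×3 matrix with B₁₁ = (m2+m4)(m1²+m3²)/(2M(m1+m3)) + (m1+m3)(m2²+m4²)/(2M(m2+m4)), B₁₂ = B₂₁ = −(1/2)·√(m1·m3·(m2+m4)/M)·(m3−m1)/(m1+m3), B₁₃ = B₃₁ = −(1/2)·√(m2·m4·(m1+m3)/M)·(m2−m4)/(m2+m4), B₂₂ = m1·m3/(m1+m3), B₂₃ = B₃₂ = 0, B₃₃ = m2·m4/(m2+m4). Then B has a repeated eigenvalue if and only if at least three of the four masses m1, m2, m3, m4 are equal, i.e., there exist three distinct indices i, j, k in {1,2,3,4} with m_i = m_j = m_k. (Proposition 3.1: degeneracy of the intrinsic inertia matrix of the regular tetrahedron.) -/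
open Polynomial
set_option maxHeartbeats 1000000 in
lemma cubic_aux (A P Q u v : ℝ) (p : ℝ[X])
    (hp : p = X^3 - C (A+P+Q) * X^2 + C (A*P+A*Q+P*Q-u^2-v^2) * X
        - C (A*P*Q - u^2*Q - v^2*P)) :
    (∃ μ : ℝ, 2 ≤ p.rootMultiplicity μ) ↔
    ((u = 0 ∧ (P-A)*(P-Q) = v^2) ∨ (v = 0 ∧ (Q-A)*(Q-P) = u^2)) := by
  have hm : p.Monic := by rw [hp]; monicity!
  have hp0 : p ≠ 0 := hm.ne_zero
  constructor
  · rintro ⟨μ, hμ⟩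
    obtain ⟨q, hq⟩ := (le_rootMultiplicity_iff hp0).mp hμ
    have he1 : p.eval μ = 0 := by rw [hq]; simp
    have he2 : p.derivative.eval μ = 0 := by
      rw [hq]
      simp [derivative_mul, derivative_pow]
    have hder : p.derivative = C 3 * X^2 - C (2*(A+P+Q)) * X
        + C (A*P+A*Q+P*Q-u^2-v^2) := by
      rw [hp]
      simp [derivative_X_pow, derivative_pow]
      ring
    have e1 : μ^3 - (A+P+Q)*μ^2 + (A*P+A*Q+P*Q-u^2-v^2)*μ
        - (A*P*Q - u^2*Q - v^2*P) = 0 := by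
      rw [hp] at he1; simpa using he1
    have e2 : 3*μ^2 - 2*(A+P+Q)*μ + (A*P+A*Q+P*Q-u^2-v^2) = 0 := by
      rw [hder] at he2; simpa using he2
    have key : ((μ-P)*(μ-Q))^3 + (u*(μ-Q))^2 * ((μ-P)*(μ-Q))
        + (v*(μ-P))^2 * ((μ-P)*(μ-Q)) = 0 := by
      linear_combination ((μ-P)*(μ-Q))^2 * e2 - (2*μ-P-Q)*((μ-P)*(μ-Q)) * e1
    have hG : (μ-P)*(μ-Q) = 0 := by
      set G : ℝ := (μ-P)*(μ-Q) with hGdef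
      rcases lt_trichotomy G 0 with h | h | h
      · have h1 : (u*(μ-Q))^2 * G ≤ 0 :=
          mul_nonpos_of_nonneg_of_nonpos (sq_nonneg _) h.le
        have h2 : (v*(μ-P))^2 * G ≤ 0 :=
          mul_nonpos_of_nonneg_of_nonpos (sq_nonneg _) h.le
        nlinarith [mul_pos (mul_pos (neg_pos.2 h) (neg_pos.2 h)) (neg_pos.2 h)]
      · exact h
      · have h1 : 0 ≤ (u*(μ-Q))^2 * G := mul_nonneg (sq_nonneg _) h.le
        have h2 : 0 ≤ (v*(μ-P))^2 * G := mul_nonneg (sq_nonneg _) h.le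
        nlinarith [mul_pos (mul_pos h h) h]
    rcases mul_eq_zero.mp hG with h | h
    · -- μ = P
      have hμP : μ = P := sub_eq_zero.mp h
      rw [hμP] at e1 e2
      have hu2 : u^2 * (P-Q) = 0 := by linear_combination -e1
      rcases mul_eq_zero.mp hu2 with h2 | h2
      · have hu : u = 0 := sq_eq_zero_iff.mp h2
        rw [hu] at e2
        exact Or.inl ⟨hu, by linear_combination e2⟩
      · have hsum : u^2 + v^2 = 0 := by
          linear_combination -e2 + (P - A) * h2
        have hu : u = 0 := by
          have h0 : u^2 = 0 := by nlinarith [sq_nonneg v]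
          exact sq_eq_zero_iff.mp h0
        have hv : v = 0 := by
          have h0 : v^2 = 0 := by nlinarith [sq_nonneg u]
          exact sq_eq_zero_iff.mp h0
        exact Or.inl ⟨hu, by rw [hv]; linear_combination (P-A) * h2⟩
    · -- μ = Q
      have hμQ : μ = Q := sub_eq_zero.mp h
      rw [hμQ] at e1 e2
      have hv2 : v^2 * (Q-P) = 0 := by linear_combination -e1
      rcases mul_eq_zero.mp hv2 with h2 | h2
      · have hv : v = 0 := sq_eq_zero_iff.mp h2
        rw [hv] at e2
        exact Or.inr ⟨hv, by linear_combination e2⟩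
      · have hsum : u^2 + v^2 = 0 := by
          linear_combination -e2 + (Q - A) * h2
        have hu : u = 0 := by
          have h0 : u^2 = 0 := by nlinarith [sq_nonneg v]
          exact sq_eq_zero_iff.mp h0
        have hv : v = 0 := by
          have h0 : v^2 = 0 := by nlinarith [sq_nonneg u]
          exact sq_eq_zero_iff.mp h0
        exact Or.inr ⟨hv, by rw [hu]; linear_combination (Q-A) * h2⟩
  · rintro (⟨hu, hv2⟩ | ⟨hv, hu2⟩)
    · refine ⟨P, (le_rootMultiplicity_iff hp0).mpr ⟨X - C (A+Q-P), ?_⟩⟩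
      have hC : (C P - C A) * (C P - C Q) = (C v)^2 := by
        rw [← map_sub, ← map_sub, ← map_mul, ← map_pow, hv2]
      rw [hp, hu]
      simp only [map_add, map_sub, map_mul, map_pow, map_zero]
      linear_combination (X - C P) * hC
    · refine ⟨Q, (le_rootMultiplicity_iff hp0).mpr ⟨X - C (A+P-Q), ?_⟩⟩
      have hC : (C Q - C A) * (C Q - C P) = (C u)^2 := by
        rw [← map_sub, ← map_sub, ← map_mul, ← map_pow, hu2]
      rw [hp, hv]
      simp only [map_add, map_sub, map_mul, map_pow, map_zero]
      linear_combination (X - C Q) * hC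
set_option maxHeartbeats 1000000 in
lemma charpoly_shape (a b c d e : ℝ) :
    (Matrix.charpoly !![a, b, c; b, d, 0; c, 0, e]) =
      X^3 - C (a+d+e) * X^2 + C (a*d+a*e+d*e-b^2-c^2) * X
        - C (a*d*e - b^2*e - c^2*d) := by
  rw [Matrix.charpoly, Matrix.det_fin_three]
  simp [Matrix.charmatrix_apply_eq, Matrix.charmatrix_apply_ne,
    Matrix.cons_val_zero, Matrix.cons_val_one, Matrix.head_cons]
  ring

lemma disjunct_iff (m1 m2 m3 m4 A P Q u v : ℝ)
    (h1 : 0 < m1) (h2 : 0 < m2) (h3 : 0 < m3) (h4 : 0 < m4)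
    (hA : A = (m2 + m4) * (m1 ^ 2 + m3 ^ 2) / (2 * (m1 + m2 + m3 + m4) * (m1 + m3))
           + (m1 + m3) * (m2 ^ 2 + m4 ^ 2) / (2 * (m1 + m2 + m3 + m4) * (m2 + m4)))
    (hP : P = m1 * m3 / (m1 + m3)) (hQ : Q = m2 * m4 / (m2 + m4))
    (hu0 : u = 0 ↔ m1 = m3)
    (hv2 : v ^ 2 = (m2 * m4 * (m1 + m3) / (m1 + m2 + m3 + m4))
        * ((m2 - m4) / (m2 + m4)) ^ 2 / 4) :
    (u = 0 ∧ (P - A) * (P - Q) = v ^ 2) ↔ (m1 = m3 ∧ (m1 = m2 ∨ m1 = m4)) := by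
  constructor
  · rintro ⟨h, hq⟩
    have h13 : m1 = m3 := hu0.mp h
    subst h13
    refine ⟨rfl, ?_⟩
    have d1 : (m1 + m1) ≠ 0 := by positivity
    have d2 : (m2 + m4) ≠ 0 := by positivity
    have d3 : (m1 + m2 + m1 + m4) ≠ 0 := by positivity
    have hfac : (P - A) * (P - Q) - v ^ 2
        = m1 * ((m1 - m2) * (m1 - m4)) / (2 * (m1 + m2 + m1 + m4)) := by
      rw [hP, hA, hQ, hv2]
      field_simp
      ring
    have key : m1 * ((m1 - m2) * (m1 - m4)) / (2 * (m1 + m2 + m1 + m4)) = 0 := by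
      rw [← hfac, hq, sub_self]
    have key2 : (m1 - m2) * (m1 - m4) = 0 := by
      have hden : (2 * (m1 + m2 + m1 + m4)) ≠ 0 := by positivity
      have hnum := (div_eq_zero_iff.mp key).resolve_right hden
      rcases mul_eq_zero.mp hnum with h' | h'
      · exact absurd h' h1.ne'
      · exact h'
    rcases mul_eq_zero.mp key2 with h' | h'
    · exact Or.inl (by linarith)
    · exact Or.inr (by linarith)
  · rintro ⟨h13, h24⟩
    subst h13
    refine ⟨hu0.mpr rfl, ?_⟩
    have d1 : (m1 + m1) ≠ 0 := by positivity
    have d2 : (m2 + m4) ≠ 0 := by positivity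
    have d3 : (m1 + m2 + m1 + m4) ≠ 0 := by positivity
    have hfac : (P - A) * (P - Q) - v ^ 2
        = m1 * ((m1 - m2) * (m1 - m4)) / (2 * (m1 + m2 + m1 + m4)) := by
      rw [hP, hA, hQ, hv2]
      field_simp
      ring
    have hz : (m1 - m2) * (m1 - m4) = 0 := by
      rcases h24 with h' | h'
      · rw [h']; ring
      · rw [h']; ring
    rw [hz] at hfac
    simp at hfac
    linarith

lemma fin_bridge (m1 m2 m3 m4 : ℝ) :
    ((m1 = m3 ∧ (m1 = m2 ∨ m1 = m4)) ∨ (m2 = m4 ∧ (m2 = m1 ∨ m2 = m3))) ↔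
    (∃ i j k : Fin 4, i ≠ j ∧ j ≠ k ∧ i ≠ k ∧
      ![m1, m2, m3, m4] i = ![m1, m2, m3, m4] j ∧
      ![m1, m2, m3, m4] j = ![m1, m2, m3, m4] k) := by
  constructor
  · rintro (⟨h13, h12 | h14⟩ | ⟨h24, h21 | h23⟩)
    · exact ⟨0, 1, 2, by decide, by decide, by decide, by simpa using h12,
        by simp; rw [← h12, ← h13]⟩
    · exact ⟨0, 2, 3, by decide, by decide, by decide, by simpa using h13,
        by simp; rw [← h13, ← h14]⟩
    · exact ⟨0, 1, 3, by decide, by decide, by decide, by simp; rw [h21],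
        by simpa using h24⟩
    · exact ⟨1, 2, 3, by decide, by decide, by decide, by simpa using h23,
        by simp; rw [← h23, ← h24]⟩
  · rintro ⟨i, j, k, hij, hjk, hik, e1, e2⟩
    fin_cases i <;> fin_cases j <;> fin_cases k <;> simp_all

/-- Proposition 3.1: the intrinsic inertia matrix of the regular tetrahedron with unit
sides is degenerate (has a repeated eigenvalue) iff at least three of the masses are
equal. -/
theorem inertia_tetrahedron_degenerate_iff (m1 m2 m3 m4 : ℝ)
    (h1 : 0 < m1) (h2 : 0 < m2) (h3 : 0 < m3) (h4 : 0 < m4) :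
    (∃ μ : ℝ, 2 ≤ (Matrix.charpoly
      !![(m2 + m4) * (m1 ^ 2 + m3 ^ 2) / (2 * (m1 + m2 + m3 + m4) * (m1 + m3))
           + (m1 + m3) * (m2 ^ 2 + m4 ^ 2) / (2 * (m1 + m2 + m3 + m4) * (m2 + m4)),
         -(1 / 2) * Real.sqrt (m1 * m3 * (m2 + m4) / (m1 + m2 + m3 + m4))
           * ((m3 - m1) / (m1 + m3)),
         -(1 / 2) * Real.sqrt (m2 * m4 * (m1 + m3) / (m1 + m2 + m3 + m4))
           * ((m2 - m4) / (m2 + m4));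
         -(1 / 2) * Real.sqrt (m1 * m3 * (m2 + m4) / (m1 + m2 + m3 + m4))
           * ((m3 - m1) / (m1 + m3)),
         m1 * m3 / (m1 + m3), 0;
         -(1 / 2) * Real.sqrt (m2 * m4 * (m1 + m3) / (m1 + m2 + m3 + m4))
           * ((m2 - m4) / (m2 + m4)),
         0, m2 * m4 / (m2 + m4)]).rootMultiplicity μ) ↔
      (∃ i j k : Fin 4, i ≠ j ∧ j ≠ k ∧ i ≠ k ∧
        ![m1, m2, m3, m4] i = ![m1, m2, m3, m4] j ∧
        ![m1, m2, m3, m4] j = ![m1, m2, m3, m4] k) := by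
  set A : ℝ := (m2 + m4) * (m1 ^ 2 + m3 ^ 2) / (2 * (m1 + m2 + m3 + m4) * (m1 + m3))
      + (m1 + m3) * (m2 ^ 2 + m4 ^ 2) / (2 * (m1 + m2 + m3 + m4) * (m2 + m4)) with hA
  set u : ℝ := -(1 / 2) * Real.sqrt (m1 * m3 * (m2 + m4) / (m1 + m2 + m3 + m4))
      * ((m3 - m1) / (m1 + m3)) with hu
  set v : ℝ := -(1 / 2) * Real.sqrt (m2 * m4 * (m1 + m3) / (m1 + m2 + m3 + m4))
      * ((m2 - m4) / (m2 + m4)) with hv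
  set P : ℝ := m1 * m3 / (m1 + m3) with hP
  set Q : ℝ := m2 * m4 / (m2 + m4) with hQ
  rw [charpoly_shape A u v P Q, cubic_aux A P Q u v _ rfl]
  -- scalar facts
  have hsu : (0:ℝ) < Real.sqrt (m1 * m3 * (m2 + m4) / (m1 + m2 + m3 + m4)) :=
    Real.sqrt_pos.mpr (by positivity)
  have hsv : (0:ℝ) < Real.sqrt (m2 * m4 * (m1 + m3) / (m1 + m2 + m3 + m4)) :=
    Real.sqrt_pos.mpr (by positivity)
  have hu0 : u = 0 ↔ m1 = m3 := by
    rw [hu]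
    constructor
    · intro h
      rcases mul_eq_zero.mp h with h' | h'
      · exact absurd h' (by positivity)
      · have := (div_eq_zero_iff.mp h').resolve_right (by positivity)
        linarith
    · intro h; rw [h]; simp
  have hv0 : v = 0 ↔ m2 = m4 := by
    rw [hv]
    constructor
    · intro h
      rcases mul_eq_zero.mp h with h' | h'
      · exact absurd h' (by positivity)
      · have := (div_eq_zero_iff.mp h').resolve_right (by positivity)
        linarith
    · intro h; rw [h]; simp
  have hv2 : v ^ 2 = (m2 * m4 * (m1 + m3) / (m1 + m2 + m3 + m4))
      * ((m2 - m4) / (m2 + m4)) ^ 2 / 4 := by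
    have hX : (0:ℝ) ≤ m2 * m4 * (m1 + m3) / (m1 + m2 + m3 + m4) := by positivity
    calc v ^ 2 = Real.sqrt (m2 * m4 * (m1 + m3) / (m1 + m2 + m3 + m4)) ^ 2
          * ((m2 - m4) / (m2 + m4)) ^ 2 / 4 := by rw [hv]; ring
      _ = _ := by rw [Real.sq_sqrt hX]
  have hu2 : u ^ 2 = (m1 * m3 * (m2 + m4) / (m2 + m1 + m4 + m3))
      * ((m1 - m3) / (m1 + m3)) ^ 2 / 4 := by
    have hX : (0:ℝ) ≤ m1 * m3 * (m2 + m4) / (m1 + m2 + m3 + m4) := by positivity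
    calc u ^ 2 = Real.sqrt (m1 * m3 * (m2 + m4) / (m1 + m2 + m3 + m4)) ^ 2
          * ((m3 - m1) / (m1 + m3)) ^ 2 / 4 := by rw [hu]; ring
      _ = _ := by rw [Real.sq_sqrt hX]; ring_nf
  have hA2 : A = (m1 + m3) * (m2 ^ 2 + m4 ^ 2) / (2 * (m2 + m1 + m4 + m3) * (m2 + m4))
      + (m2 + m4) * (m1 ^ 2 + m3 ^ 2) / (2 * (m2 + m1 + m4 + m3) * (m1 + m3)) := by
    rw [hA]; ring
  have d1 := disjunct_iff m1 m2 m3 m4 A P Q u v h1 h2 h3 h4 hA hP hQ hu0 hv2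
  have d2 := disjunct_iff m2 m1 m4 m3 A Q P v u h2 h1 h4 h3 hA2 hQ hP hv0 hu2
  rw [d1, d2]
  exact fin_bridge m1 m2 m3 m4
end

section
/- Let m1, m2 be positive real numbers and let B be the real symmetric 3×3 matrix with B₁₁ = m2(3m1² + 3m2² + 2m1m2)/(2(m1+3m2)(m1+m2)), B₁₂ = B₂₁ = −(m2/2)·√(2m1/(m1+3m2))·(m2−m1)/(m1+m2), B₂₂ = m1m2/(m1+m2), B₁₃ = B₃₁ = B₂₃ = B₃₂ = 0, B₃₃ = m2/2. Then the characteristic polynomial of B equals (X − 2m1m2/(m1+3m2))·(X − m2/2)²; in particular the eigenvalues of B are λ₁ = 2m1m2/(m1+3m2) and the double eigenvalue λ₂ = λ₃ = m2/2. -/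
open Polynomial in
theorem charpoly_aux (a b c d p q : ℝ) (h1 : a + b = p + q) (h2 : a*b - c^2 = p*q) :
    Matrix.charpoly !![a, c, 0; c, b, 0; 0, 0, d]
      = (X - C p) * (X - C q) * (X - C d) := by
  rw [Matrix.charpoly, Matrix.det_fin_three]
  simp [Matrix.charmatrix_apply, Matrix.one_apply]
  have e1 : C a + C b = C p + C q := by rw [← C_add, ← C_add, h1]
  have e2' : a * b - c * c = p * q := by linear_combination h2
  have e2 : C a * C b - C c * C c = C p * C q := by
    rw [← C_mul, ← C_mul, ← C_sub, e2', C_mul]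
  linear_combination (X - C d) * e2 - X * (X - C d) * e1

open Polynomial in
/-- The inertia matrix of the regular tetrahedron with three equal masses
(m2 = m3 = m4) has characteristic polynomial
(X − 2m1m2/(m1+3m2))·(X − m2/2)². -/
theorem inertia_three_equal_masses_charpoly (m1 m2 : ℝ) (h1 : 0 < m1) (h2 : 0 < m2) :
    Matrix.charpoly
      !![m2 * (3 * m1 ^ 2 + 3 * m2 ^ 2 + 2 * m1 * m2) / (2 * (m1 + 3 * m2) * (m1 + m2)),
         -(m2 / 2) * Real.sqrt (2 * m1 / (m1 + 3 * m2)) * ((m2 - m1) / (m1 + m2)), 0;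
         -(m2 / 2) * Real.sqrt (2 * m1 / (m1 + 3 * m2)) * ((m2 - m1) / (m1 + m2)),
         m1 * m2 / (m1 + m2), 0;
         0, 0, m2 / 2]
      = (X - C (2 * m1 * m2 / (m1 + 3 * m2))) * (X - C (m2 / 2)) ^ 2 := by
  have hd : (0:ℝ) < m1 + 3 * m2 := by linarith
  have hmm : (0:ℝ) < m1 + m2 := by linarith
  have hs : Real.sqrt (2 * m1 / (m1 + 3 * m2)) ^ 2 = 2 * m1 / (m1 + 3 * m2) :=
    Real.sq_sqrt (by positivity)
  rw [pow_two (X - C (m2 / 2)), ← mul_assoc]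
  apply charpoly_aux
  · field_simp
    ring
  · have : (-(m2 / 2) * Real.sqrt (2 * m1 / (m1 + 3 * m2)) * ((m2 - m1) / (m1 + m2))) ^ 2
        = (m2 / 2) ^ 2 * (2 * m1 / (m1 + 3 * m2)) * ((m2 - m1) / (m1 + m2)) ^ 2 := by
      rw [mul_pow, mul_pow, hs]; ring
    rw [this]
    field_simp
    ring
end

section
/- Let X be a real m×k matrix, A a real symmetric k×k matrix, and Ω a real antisymmetric m×m matrix such that Ω²X = 2XA (the relative equilibrium equation). Set B = XᵀX and S = XXᵀ. Then A commutes with B and Ω² commutes with S: A*B = B*A and Ω²*S = S*Ω². -/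
/-- The relative-equilibrium equation Ω²X = 2XA implies the commutations
[A, B] = 0 and [Ω², S] = 0, where B = XᵀX and S = XXᵀ. -/
theorem balanced_commutations {m k : ℕ}
    (X : Matrix (Fin m) (Fin k) ℝ) (A : Matrix (Fin k) (Fin k) ℝ)
    (Ω : Matrix (Fin m) (Fin m) ℝ)
    (hA : A.transpose = A) (hΩ : Ω.transpose = -Ω)
    (hre : Ω ^ 2 * X = (2 : ℝ) • (X * A)) :
    A * (X.transpose * X) = (X.transpose * X) * A ∧
      Ω ^ 2 * (X * X.transpose) = (X * X.transpose) * Ω ^ 2 := by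
  have hΩ2 : (Ω ^ 2).transpose = Ω ^ 2 := by
    rw [pow_two, Matrix.transpose_mul, hΩ, neg_mul_neg]
  have ht : X.transpose * Ω ^ 2 = (2 : ℝ) • (A * X.transpose) := by
    have := congrArg Matrix.transpose hre
    simpa [Matrix.transpose_mul, hΩ2, hA] using this
  constructor
  · have e1 : X.transpose * Ω ^ 2 * X = (2 : ℝ) • (X.transpose * X * A) := by
      rw [Matrix.mul_assoc, hre, Matrix.mul_smul, Matrix.mul_assoc]
    have e2 : X.transpose * Ω ^ 2 * X = (2 : ℝ) • (A * (X.transpose * X)) := by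
      rw [ht, Matrix.smul_mul, Matrix.mul_assoc]
    have h := e2.symm.trans e1
    have h2 := smul_right_injective (Matrix (Fin k) (Fin k) ℝ) (two_ne_zero (α := ℝ)) h
    rw [h2, Matrix.mul_assoc]
  · rw [← Matrix.mul_assoc, hre, Matrix.smul_mul, Matrix.mul_assoc, Matrix.mul_assoc, ht,
      Matrix.mul_smul]
end

section
/- Let X be a real m×k matrix, A a real symmetric k×k matrix, and Ω a real antisymmetric m×m matrix such that Ω²X = 2XA. Define R = −XᵀΩX. Then R is antisymmetric and A commutes with R: A*R = R*A. -/
/-- The relative-equilibrium equation Ω²X = 2XA implies that R = −XᵀΩX is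
antisymmetric and commutes with A. -/
theorem winterConley_commutes_with_R {m k : ℕ}
    (X : Matrix (Fin m) (Fin k) ℝ) (A : Matrix (Fin k) (Fin k) ℝ)
    (Ω : Matrix (Fin m) (Fin m) ℝ)
    (hA : A.transpose = A) (hΩ : Ω.transpose = -Ω)
    (hre : Ω ^ 2 * X = (2 : ℝ) • (X * A)) :
    (-(X.transpose * Ω * X)).transpose = -(-(X.transpose * Ω * X)) ∧
      A * (-(X.transpose * Ω * X)) = (-(X.transpose * Ω * X)) * A := by
  constructor
  · simp [Matrix.transpose_mul, hΩ, Matrix.mul_assoc]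
  · -- transpose of hre
    have hT : X.transpose * Ω ^ 2 = (2 : ℝ) • (A * X.transpose) := by
      have h := congrArg Matrix.transpose hre
      simpa [Matrix.transpose_mul, pow_two, hΩ, hA, Matrix.mul_assoc,
        Matrix.mul_neg, Matrix.neg_mul] using h
    have key : (2 : ℝ) • (A * (X.transpose * Ω * X)) =
        (2 : ℝ) • ((X.transpose * Ω * X) * A) := by
      calc (2 : ℝ) • (A * (X.transpose * Ω * X))
          = ((2 : ℝ) • (A * X.transpose)) * (Ω * X) := by
            rw [Matrix.smul_mul]; rw [Matrix.mul_assoc, Matrix.mul_assoc]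
        _ = X.transpose * Ω ^ 2 * (Ω * X) := by rw [hT]
        _ = X.transpose * Ω * (Ω ^ 2 * X) := by
            simp only [pow_two, Matrix.mul_assoc]
        _ = X.transpose * Ω * ((2 : ℝ) • (X * A)) := by rw [hre]
        _ = (2 : ℝ) • ((X.transpose * Ω * X) * A) := by
            rw [Matrix.mul_smul]; simp only [Matrix.mul_assoc]
    have := smul_right_injective (Matrix (Fin k) (Fin k) ℝ) (two_ne_zero (α := ℝ)) key
    simp only [Matrix.neg_mul, Matrix.mul_neg, this]
end

section
/- Let m1, m2, m3, m4 be real numbers and let K be the real 4×6 matrix K = [[m3−m1, 0, m1−m2, 0, m2−m3, 0], [0, m4−m1, m1−m2, 0, 0, m2−m4], [m1−m3, m4−m1, 0, m3−m4, 0, 0], [0, 0, 0, m3−m4, m2−m3, m4−m2]]. Then: the rank of K is 0 if and only if m1 = m2 = m3 = m4; if exactly three of the masses are equal (three of them coincide but not all four), the rank of K is 2; and if no three of the masses are equal, the rank of K is 3. -/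
open Matrix

private lemma vec6_five {α : Type*} (a b c d e f : α) : ![a,b,c,d,e,f] (5 : Fin 6) = f := rfl

private lemma submatrix_rank_le' {k l m n : Type*} [Fintype k] [Fintype l] [Fintype m] [Fintype n]
    [DecidableEq m] [DecidableEq n]
    (A : Matrix m n ℝ) (f : k → m) (g : l → n) :
    (A.submatrix f g).rank ≤ A.rank := by
  have h1 : A.submatrix f g =
      (Matrix.of fun i t => if f i = t then (1:ℝ) else 0) * A *
        (Matrix.of fun t j => if t = g j then (1:ℝ) else 0) := by
    ext i j
    simp [Matrix.mul_apply, ite_mul, mul_ite, Finset.sum_ite_eq, Finset.sum_ite_eq']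
  rw [h1]
  exact le_trans (Matrix.rank_mul_le_left _ _) (Matrix.rank_mul_le_right _ _)

private lemma le_rank_of_det' {m n : Type*} [Fintype m] [Fintype n] [DecidableEq m] [DecidableEq n]
    {r : ℕ} (A : Matrix m n ℝ) (f : Fin r → m) (g : Fin r → n)
    (h : (A.submatrix f g).det ≠ 0) : r ≤ A.rank := by
  have hu := Matrix.rank_of_isUnit (A.submatrix f g)
    ((Matrix.isUnit_iff_isUnit_det _).mpr (isUnit_iff_ne_zero.mpr h))
  rw [Fintype.card_fin] at hu
  exact hu ▸ submatrix_rank_le' A f g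

private lemma rank_le_of_eq_mul' {m n : Type*} [Fintype m] [Fintype n] {r : ℕ}
    (A : Matrix m n ℝ) (B : Matrix m (Fin r) ℝ) (C : Matrix (Fin r) n ℝ) (h : A = B * C) :
    A.rank ≤ r := by
  rw [h]
  exact le_trans (Matrix.rank_mul_le_left B C) (by simpa using Matrix.rank_le_card_width B)

set_option maxHeartbeats 1000000 in
/-- Rank of the matrix K of the linearization at the regular tetrahedron of the
equations of balanced 4-body configurations: rank 0 iff all four masses are equal,
rank 2 if exactly three are equal, rank 3 if no three are equal. -/
theorem rank_linearized_balanced_equations (m1 m2 m3 m4 : ℝ) :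
    (Matrix.rank
        !![m3 - m1, 0, m1 - m2, 0, m2 - m3, 0;
           0, m4 - m1, m1 - m2, 0, 0, m2 - m4;
           m1 - m3, m4 - m1, 0, m3 - m4, 0, 0;
           0, 0, 0, m3 - m4, m2 - m3, m4 - m2] = 0
      ↔ (m1 = m2 ∧ m2 = m3 ∧ m3 = m4)) ∧
    ((((m1 = m2 ∧ m2 = m3) ∨ (m1 = m2 ∧ m2 = m4) ∨ (m1 = m3 ∧ m3 = m4) ∨
        (m2 = m3 ∧ m3 = m4)) ∧ ¬(m1 = m2 ∧ m2 = m3 ∧ m3 = m4)) →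
      Matrix.rank
        !![m3 - m1, 0, m1 - m2, 0, m2 - m3, 0;
           0, m4 - m1, m1 - m2, 0, 0, m2 - m4;
           m1 - m3, m4 - m1, 0, m3 - m4, 0, 0;
           0, 0, 0, m3 - m4, m2 - m3, m4 - m2] = 2) ∧
    (¬((m1 = m2 ∧ m2 = m3) ∨ (m1 = m2 ∧ m2 = m4) ∨ (m1 = m3 ∧ m3 = m4) ∨
        (m2 = m3 ∧ m3 = m4)) →
      Matrix.rank
        !![m3 - m1, 0, m1 - m2, 0, m2 - m3, 0;
           0, m4 - m1, m1 - m2, 0, 0, m2 - m4;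
           m1 - m3, m4 - m1, 0, m3 - m4, 0, 0;
           0, 0, 0, m3 - m4, m2 - m3, m4 - m2] = 3) := by
  set K : Matrix (Fin 4) (Fin 6) ℝ :=
    !![m3 - m1, 0, m1 - m2, 0, m2 - m3, 0;
       0, m4 - m1, m1 - m2, 0, 0, m2 - m4;
       m1 - m3, m4 - m1, 0, m3 - m4, 0, 0;
       0, 0, 0, m3 - m4, m2 - m3, m4 - m2] with hK
  have hfact : ∀ (B : Matrix (Fin 4) (Fin 2) ℝ) (C : Matrix (Fin 2) (Fin 6) ℝ),
      K = B * C → K.rank ≤ 2 := fun B C h => rank_le_of_eq_mul' K B C h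
  refine ⟨⟨?_, ?_⟩, ?_, ?_⟩
  · -- rank 0 → all equal
    intro h
    by_contra hne
    have one_le : ∀ (i : Fin 4) (j : Fin 6), K i j ≠ 0 → (1 : ℕ) ≤ K.rank := by
      intro i j hij
      refine le_rank_of_det' K ![i] ![j] ?_
      rw [Matrix.det_fin_one]
      simpa using hij
    by_cases h12 : m1 = m2
    · by_cases h23 : m2 = m3
      · have h34 : m3 ≠ m4 := fun hh => hne ⟨h12, h23, hh⟩
        have : (1:ℕ) ≤ K.rank := one_le 2 3 (show m3 - m4 ≠ 0 from sub_ne_zero.mpr h34)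
        omega
      · have : (1:ℕ) ≤ K.rank := one_le 0 4 (show m2 - m3 ≠ 0 from sub_ne_zero.mpr h23)
        omega
    · have : (1:ℕ) ≤ K.rank := one_le 0 2 (show m1 - m2 ≠ 0 from sub_ne_zero.mpr h12)
      omega
  · -- all equal → rank 0
    rintro ⟨h12, h23, h34⟩
    have hz : K = 0 := by
      subst h12 h23 h34
      ext i j
      fin_cases i <;> fin_cases j <;> simp [hK, vec6_five, Matrix.vecHead, Matrix.vecTail]
    rw [hz, Matrix.rank_zero]
  · -- exactly three equal → rank 2
    rintro ⟨(⟨h, h'⟩ | ⟨h, h'⟩ | ⟨h, h'⟩ | ⟨h, h'⟩), hn⟩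
    · -- m1 = m2 = m3, m3 ≠ m4
      have h34 : m3 ≠ m4 := fun hh => hn ⟨h, h', hh⟩
      have k1 : m3 - m4 ≠ 0 := sub_ne_zero.mpr h34
      refine le_antisymm ?_ ?_
      · refine hfact !![0,0;1,0;0,1;-1,1]
          !![(0:ℝ), m4 - m1, m1 - m2, 0, 0, m2 - m4;
             m1 - m3, m4 - m1, 0, m3 - m4, 0, 0] ?_
        ext i j
        fin_cases i <;> fin_cases j <;>
          simp [hK, vec6_five, Matrix.vecHead, Matrix.vecTail, Matrix.mul_apply, Fin.sum_univ_two] <;> linarith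
      · refine le_rank_of_det' K ![1, 2] ![1, 3] ?_
        have e : K.submatrix ![1, 2] ![1, 3] = !![m4 - m1, 0; m4 - m1, m3 - m4] := by
          ext i j; fin_cases i <;> fin_cases j <;> rfl
        have k2 : m4 - m1 ≠ 0 := fun hh => k1 (by linarith)
        have hd : (K.submatrix ![1, 2] ![1, 3]).det = (m4 - m1) * (m3 - m4) := by
          rw [e, Matrix.det_fin_two]
          norm_num
          try ring
        rw [hd]
        exact mul_ne_zero k2 k1
    · -- m1 = m2 = m4, m3 distinct
      have h23 : m2 ≠ m3 := fun hh => hn ⟨h, hh, by linarith⟩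
      have k1 : m3 - m1 ≠ 0 := fun hh => h23 (by linarith)
      have k2 : m3 - m4 ≠ 0 := fun hh => h23 (by linarith)
      refine le_antisymm ?_ ?_
      · refine hfact !![1,0;0,0;0,1;1,1]
          !![m3 - m1, 0, m1 - m2, 0, m2 - m3, 0;
             m1 - m3, m4 - m1, 0, m3 - m4, 0, 0] ?_
        ext i j
        fin_cases i <;> fin_cases j <;>
          simp [hK, vec6_five, Matrix.vecHead, Matrix.vecTail, Matrix.mul_apply, Fin.sum_univ_two] <;> linarith
      · refine le_rank_of_det' K ![0, 2] ![0, 3] ?_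
        have e : K.submatrix ![0, 2] ![0, 3] = !![m3 - m1, 0; m1 - m3, m3 - m4] := by
          ext i j; fin_cases i <;> fin_cases j <;> rfl
        have hd : (K.submatrix ![0, 2] ![0, 3]).det = (m3 - m1) * (m3 - m4) := by
          rw [e, Matrix.det_fin_two]
          norm_num
          try ring
        rw [hd]
        exact mul_ne_zero k1 k2
    · -- m1 = m3 = m4, m2 distinct
      have h12 : m1 ≠ m2 := fun hh => hn ⟨hh, by linarith, h'⟩
      have k1 : m1 - m2 ≠ 0 := sub_ne_zero.mpr h12
      have k2 : m2 - m3 ≠ 0 := fun hh => h12 (by linarith)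
      refine le_antisymm ?_ ?_
      · refine hfact !![1,0;0,1;0,0;1,-1]
          !![m3 - m1, 0, m1 - m2, 0, m2 - m3, 0;
             (0:ℝ), m4 - m1, m1 - m2, 0, 0, m2 - m4] ?_
        ext i j
        fin_cases i <;> fin_cases j <;>
          simp [hK, vec6_five, Matrix.vecHead, Matrix.vecTail, Matrix.mul_apply, Fin.sum_univ_two] <;> linarith
      · refine le_rank_of_det' K ![0, 1] ![2, 4] ?_
        have e : K.submatrix ![0, 1] ![2, 4] = !![m1 - m2, m2 - m3; m1 - m2, 0] := by
          ext i j; fin_cases i <;> fin_cases j <;> rfl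
        have hd : (K.submatrix ![0, 1] ![2, 4]).det = -((m2 - m3) * (m1 - m2)) := by
          rw [e, Matrix.det_fin_two]
          norm_num
          try ring
        rw [hd]
        exact neg_ne_zero.mpr (mul_ne_zero k2 k1)
    · -- m2 = m3 = m4, m1 distinct
      have h12 : m1 ≠ m2 := fun hh => hn ⟨hh, h, h'⟩
      have k1 : m3 - m1 ≠ 0 := fun hh => h12 (by linarith)
      have k2 : m4 - m1 ≠ 0 := fun hh => h12 (by linarith)
      refine le_antisymm ?_ ?_
      · refine hfact !![1,0;0,1;-1,1;0,0]
          !![m3 - m1, 0, m1 - m2, 0, m2 - m3, 0;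
             (0:ℝ), m4 - m1, m1 - m2, 0, 0, m2 - m4] ?_
        ext i j
        fin_cases i <;> fin_cases j <;>
          simp [hK, vec6_five, Matrix.vecHead, Matrix.vecTail, Matrix.mul_apply, Fin.sum_univ_two] <;> linarith
      · refine le_rank_of_det' K ![0, 1] ![0, 1] ?_
        have e : K.submatrix ![0, 1] ![0, 1] = !![m3 - m1, 0; 0, m4 - m1] := by
          ext i j; fin_cases i <;> fin_cases j <;> rfl
        have hd : (K.submatrix ![0, 1] ![0, 1]).det = (m3 - m1) * (m4 - m1) := by
          rw [e, Matrix.det_fin_two]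
          norm_num
          try ring
        rw [hd]
        exact mul_ne_zero k1 k2
  · -- no three equal → rank 3
    intro hn
    push_neg at hn
    obtain ⟨hn1, hn2, hn3, hn4⟩ := hn
    have upper : K.rank ≤ 3 := by
      refine rank_le_of_eq_mul' K !![1,0,0;0,1,0;0,0,1;1,-1,1]
        !![m3 - m1, 0, m1 - m2, 0, m2 - m3, 0;
           0, m4 - m1, m1 - m2, 0, 0, m2 - m4;
           m1 - m3, m4 - m1, 0, m3 - m4, 0, 0] ?_
      ext i j
      fin_cases i <;> fin_cases j <;>
        simp [hK, vec6_five, Matrix.vecHead, Matrix.vecTail, Matrix.mul_apply, Fin.sum_univ_three] <;> ring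
    refine le_antisymm upper ?_
    by_cases h12 : m1 = m2
    · -- m2 ≠ m3, m2 ≠ m4, m1 ≠ m3
      have h23 : m2 ≠ m3 := hn1 h12
      have h24 : m2 ≠ m4 := hn2 h12
      have k1 : m1 - m3 ≠ 0 := fun hh => h23 (by linarith)
      have k2 : m2 - m3 ≠ 0 := sub_ne_zero.mpr h23
      have k3 : m2 - m4 ≠ 0 := sub_ne_zero.mpr h24
      refine le_rank_of_det' K ![0, 1, 2] ![0, 4, 5] ?_
      have e : K.submatrix ![0, 1, 2] ![0, 4, 5] =
          !![m3 - m1, m2 - m3, 0; 0, 0, m2 - m4; m1 - m3, 0, 0] := by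
        ext i j; fin_cases i <;> fin_cases j <;> rfl
      have hd : (K.submatrix ![0, 1, 2] ![0, 4, 5]).det = (m1 - m3) * ((m2 - m3) * (m2 - m4)) := by
        rw [e, Matrix.det_fin_three]
        norm_num [Matrix.vecHead, Matrix.vecTail, Matrix.cons_val_two]
        try ring
      rw [hd]
      exact mul_ne_zero k1 (mul_ne_zero k2 k3)
    · by_cases h13 : m1 = m3
      · have h23 : m2 ≠ m3 := fun hh => h12 (by linarith)
        have h34 : m3 ≠ m4 := hn3 h13
        have k1 : m3 - m4 ≠ 0 := sub_ne_zero.mpr h34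
        have k2 : m2 - m3 ≠ 0 := sub_ne_zero.mpr h23
        have k3 : m1 - m2 ≠ 0 := sub_ne_zero.mpr h12
        refine le_rank_of_det' K ![0, 1, 2] ![2, 3, 4] ?_
        have e : K.submatrix ![0, 1, 2] ![2, 3, 4] =
            !![m1 - m2, 0, m2 - m3; m1 - m2, 0, 0; 0, m3 - m4, 0] := by
          ext i j; fin_cases i <;> fin_cases j <;> rfl
        have hd : (K.submatrix ![0, 1, 2] ![2, 3, 4]).det = (m3 - m4) * ((m2 - m3) * (m1 - m2)) := by
          rw [e, Matrix.det_fin_three]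
          norm_num [Matrix.vecHead, Matrix.vecTail, Matrix.cons_val_two]
          try ring
        rw [hd]
        exact mul_ne_zero k1 (mul_ne_zero k2 k3)
      · by_cases h34 : m3 = m4
        · have h23 : m2 ≠ m3 := fun hh => hn4 hh h34
          have k1 : m2 - m3 ≠ 0 := sub_ne_zero.mpr h23
          have k2 : m1 - m2 ≠ 0 := sub_ne_zero.mpr h12
          have k3 : m1 - m3 ≠ 0 := sub_ne_zero.mpr h13
          refine le_rank_of_det' K ![0, 1, 2] ![0, 2, 4] ?_
          have e : K.submatrix ![0, 1, 2] ![0, 2, 4] =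
              !![m3 - m1, m1 - m2, m2 - m3; 0, m1 - m2, 0; m1 - m3, 0, 0] := by
            ext i j; fin_cases i <;> fin_cases j <;> rfl
          have hd : (K.submatrix ![0, 1, 2] ![0, 2, 4]).det = -((m2 - m3) * ((m1 - m2) * (m1 - m3))) := by
            rw [e, Matrix.det_fin_three]
            norm_num [Matrix.vecHead, Matrix.vecTail, Matrix.cons_val_two]
            try ring
          rw [hd]
          exact neg_ne_zero.mpr (mul_ne_zero k1 (mul_ne_zero k2 k3))
        · have k1 : m3 - m4 ≠ 0 := sub_ne_zero.mpr h34
          have k2 : m3 - m1 ≠ 0 := fun hh => h13 (by linarith)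
          have k3 : m1 - m2 ≠ 0 := sub_ne_zero.mpr h12
          refine le_rank_of_det' K ![0, 1, 2] ![0, 2, 3] ?_
          have e : K.submatrix ![0, 1, 2] ![0, 2, 3] =
              !![m3 - m1, m1 - m2, 0; 0, m1 - m2, 0; m1 - m3, 0, m3 - m4] := by
            ext i j; fin_cases i <;> fin_cases j <;> rfl
          have hd : (K.submatrix ![0, 1, 2] ![0, 2, 3]).det = (m3 - m4) * ((m3 - m1) * (m1 - m2)) := by
            rw [e, Matrix.det_fin_three]
            norm_num [Matrix.vecHead, Matrix.vecTail, Matrix.cons_val_two]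
            try ring
          rw [hd]
          exact mul_ne_zero k1 (mul_ne_zero k2 k3)
end

section
/- Let m1, m2, m3, m4 be real numbers such that no three of them are equal, and let K be the real 4×6 matrix K = [[m3−m1, 0, m1−m2, 0, m2−m3, 0], [0, m4−m1, m1−m2, 0, 0, m2−m4], [m1−m3, m4−m1, 0, m3−m4, 0, 0], [0, 0, 0, m3−m4, m2−m3, m4−m2]]. Then the kernel of K (the set of v ∈ ℝ⁶ with Kv = 0) is exactly the linear span of the three vectors E₁ = (1, 1, 1, 1, 1, 1), E₂ = (m2m4, m2m3, m3m4, m1m2, m1m4, m1m3), E₃ = (m2+m4, m2+m3, m3+m4, m1+m2, m1+m4, m1+m3), and these three vectors are linearly independent. -/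
open Matrix in
lemma cons_val_five' {α : Type*} {m : ℕ} (x : α) (u : Fin (m + 5) → α) :
    vecCons x u 5 = vecHead (vecTail (vecTail (vecTail (vecTail u)))) :=
  rfl

lemma mem_span_aux {E1 E2 E3 v : Fin 6 → ℝ} {D A1 A2 A3 : ℝ} (hD : D ≠ 0)
    (hv : D • v = A1 • E1 + A2 • E2 + A3 • E3) :
    v ∈ Submodule.span ℝ {E1, E2, E3} := by
  have h1 : E1 ∈ Submodule.span ℝ ({E1, E2, E3} : Set (Fin 6 → ℝ)) :=
    Submodule.subset_span (by simp)
  have h2 : E2 ∈ Submodule.span ℝ ({E1, E2, E3} : Set (Fin 6 → ℝ)) :=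
    Submodule.subset_span (by simp)
  have h3 : E3 ∈ Submodule.span ℝ ({E1, E2, E3} : Set (Fin 6 → ℝ)) :=
    Submodule.subset_span (by simp)
  have hDv : D • v ∈ Submodule.span ℝ ({E1, E2, E3} : Set (Fin 6 → ℝ)) := by
    rw [hv]
    exact Submodule.add_mem _ (Submodule.add_mem _ (Submodule.smul_mem _ _ h1)
      (Submodule.smul_mem _ _ h2)) (Submodule.smul_mem _ _ h3)
  have h := Submodule.smul_mem _ D⁻¹ hDv
  rwa [smul_smul, inv_mul_cancel₀ hD, one_smul] at h

lemma indep_aux (u v w : Fin 6 → ℝ) (i j k : Fin 6)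
    (hdet : u i * (v j * w k - v k * w j) - v i * (u j * w k - u k * w j)
        + w i * (u j * v k - u k * v j) ≠ 0) :
    LinearIndependent ℝ ![u, v, w] := by
  rw [Fintype.linearIndependent_iff]
  intro g hg
  have hi := congrFun hg i
  have hj := congrFun hg j
  have hk := congrFun hg k
  simp only [Finset.sum_apply, Pi.smul_apply, smul_eq_mul, Fin.sum_univ_three,
    Matrix.cons_val_zero, Matrix.cons_val_one, Matrix.head_cons, Matrix.cons_val_two,
    Matrix.tail_cons, Pi.zero_apply] at hi hj hk
  set Dt := u i * (v j * w k - v k * w j) - v i * (u j * w k - u k * w j)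
      + w i * (u j * v k - u k * v j) with hDt
  intro l
  fin_cases l
  · have h0 : Dt * g 0 = 0 := by
      rw [hDt]
      linear_combination (v j * w k - v k * w j) * hi + (v k * w i - v i * w k) * hj
        + (v i * w j - v j * w i) * hk
    exact (mul_eq_zero.mp h0).resolve_left hdet
  · have h0 : Dt * g 1 = 0 := by
      rw [hDt]
      linear_combination (u k * w j - u j * w k) * hi + (u i * w k - u k * w i) * hj
        + (u j * w i - u i * w j) * hk
    exact (mul_eq_zero.mp h0).resolve_left hdet
  · have h0 : Dt * g 2 = 0 := by
      rw [hDt]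
      linear_combination (u j * v k - u k * v j) * hi + (u k * v i - u i * v k) * hj
        + (u i * v j - u j * v i) * hk
    exact (mul_eq_zero.mp h0).resolve_left hdet

lemma mass_cases (m1 m2 m3 m4 : ℝ)
    (h : ¬((m1 = m2 ∧ m2 = m3) ∨ (m1 = m2 ∧ m2 = m4) ∨ (m1 = m3 ∧ m3 = m4) ∨
        (m2 = m3 ∧ m3 = m4))) :
    (m1 ≠ m2 ∧ m2 ≠ m3 ∧ m1 ≠ m3) ∨ (m1 ≠ m2 ∧ m2 ≠ m4 ∧ m1 ≠ m4) ∨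
    (m1 ≠ m3 ∧ m3 ≠ m4 ∧ m1 ≠ m4) ∨ (m2 ≠ m3 ∧ m3 ≠ m4 ∧ m2 ≠ m4) ∨
    (m1 = m2 ∧ m3 = m4 ∧ m1 ≠ m3) ∨ (m1 = m3 ∧ m2 = m4 ∧ m1 ≠ m2) ∨
    (m1 = m4 ∧ m2 = m3 ∧ m1 ≠ m2) := by
  by_cases h12 : m1 = m2 <;> by_cases h13 : m1 = m3 <;> by_cases h14 : m1 = m4 <;>
    by_cases h23 : m2 = m3 <;> by_cases h24 : m2 = m4 <;> by_cases h34 : m3 = m4 <;>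
    subst_vars <;> tauto

lemma span_le_ker (m1 m2 m3 m4 : ℝ) :
    Submodule.span ℝ
          {![1, 1, 1, 1, 1, 1],
           ![m2 * m4, m2 * m3, m3 * m4, m1 * m2, m1 * m4, m1 * m3],
           ![m2 + m4, m2 + m3, m3 + m4, m1 + m2, m1 + m4, m1 + m3]}
      ≤ LinearMap.ker
        (Matrix.mulVecLin
          !![m3 - m1, 0, m1 - m2, 0, m2 - m3, 0;
             0, m4 - m1, m1 - m2, 0, 0, m2 - m4;
             m1 - m3, m4 - m1, 0, m3 - m4, 0, 0;
             0, 0, 0, m3 - m4, m2 - m3, m4 - m2]) := by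
  rw [Submodule.span_le]
  rintro x (rfl | rfl | rfl) <;>
  · rw [SetLike.mem_coe, LinearMap.mem_ker]
    funext j
    fin_cases j <;>
    · simp [Matrix.mulVecLin_apply, Matrix.mulVec, dotProduct, Fin.sum_univ_six,
        cons_val_five']
      try ring

set_option maxHeartbeats 1600000 in
/-- When no three of the masses are equal, the kernel of the linearized
balanced-configuration matrix K is spanned by the three linearly independent
vectors E₁, E₂, E₃. -/
theorem kernel_linearized_balanced_equations (m1 m2 m3 m4 : ℝ)
    (h : ¬((m1 = m2 ∧ m2 = m3) ∨ (m1 = m2 ∧ m2 = m4) ∨ (m1 = m3 ∧ m3 = m4) ∨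
        (m2 = m3 ∧ m3 = m4))) :
    LinearMap.ker
        (Matrix.mulVecLin
          !![m3 - m1, 0, m1 - m2, 0, m2 - m3, 0;
             0, m4 - m1, m1 - m2, 0, 0, m2 - m4;
             m1 - m3, m4 - m1, 0, m3 - m4, 0, 0;
             0, 0, 0, m3 - m4, m2 - m3, m4 - m2])
      = Submodule.span ℝ
          {![1, 1, 1, 1, 1, 1],
           ![m2 * m4, m2 * m3, m3 * m4, m1 * m2, m1 * m4, m1 * m3],
           ![m2 + m4, m2 + m3, m3 + m4, m1 + m2, m1 + m4, m1 + m3]} ∧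
    LinearIndependent ℝ
      ![(![1, 1, 1, 1, 1, 1] : Fin 6 → ℝ),
        ![m2 * m4, m2 * m3, m3 * m4, m1 * m2, m1 * m4, m1 * m3],
        ![m2 + m4, m2 + m3, m3 + m4, m1 + m2, m1 + m4, m1 + m3]] := by

  rcases mass_cases m1 m2 m3 m4 h with ⟨h12, h23, h13⟩ | ⟨h12, h24, h14⟩ |
    ⟨h13, h34, h14⟩ | ⟨h23, h34, h24⟩ | ⟨h12eq, h34eq, h13⟩ | ⟨h13eq, h24eq, h12⟩ |
    ⟨h14eq, h23eq, h12⟩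
  · -- case
    refine ⟨le_antisymm ?_ (span_le_ker _ _ _ _), ?_⟩
    · intro v hv
      rw [LinearMap.mem_ker] at hv
      have e0 := congrFun hv 0
      have e1 := congrFun hv 1
      have e2 := congrFun hv 2
      have e3 := congrFun hv 3
      simp [Matrix.mulVecLin_apply, Matrix.mulVec, dotProduct,
        Fin.sum_univ_six, Pi.zero_apply, Matrix.cons_val_zero, Matrix.cons_val_one, Matrix.head_cons, Matrix.cons_val_two, Matrix.tail_cons, Matrix.cons_val_three, Matrix.cons_val_four, cons_val_five', Matrix.head_fin_const] at e0 e1 e2 e3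
      refine mem_span_aux (D := (m1 - m2) * (m2 - m3) * (m1 - m3))
        (A1 := ((-1) * m2 * m3 * m3 * v 3 + m2 * m2 * m3 * v 5 + m1 * m3 * m3 * v 3 + (-1) * m1 * m2 * m2 * v 5 + (-1) * m1 * m1 * m3 * v 1 + m1 * m1 * m2 * v 1))
        (A2 := (m3 * v 5 + (-1) * m3 * v 1 + (-1) * m2 * v 3 + m2 * v 1 + (-1) * m1 * v 5 + m1 * v 3))
        (A3 := ((-1) * m2 * m3 * v 5 + m2 * m3 * v 3 + (-1) * m1 * m3 * v 3 + m1 * m3 * v 1 + m1 * m2 * v 5 + (-1) * m1 * m2 * v 1))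
        ?_ ?_
      · exact mul_ne_zero (mul_ne_zero (sub_ne_zero.mpr h12) (sub_ne_zero.mpr h23)) (sub_ne_zero.mpr h13)
      · funext i
        fin_cases i <;>
          simp [Pi.smul_apply, Pi.add_apply, smul_eq_mul, Matrix.cons_val_zero, Matrix.cons_val_one, Matrix.head_cons, Matrix.cons_val_two, Matrix.tail_cons, Matrix.cons_val_three, Matrix.cons_val_four, cons_val_five', Matrix.head_fin_const]
        · linear_combination (((m1 - m2) * (m2 - m3))) * e2
        · ring
        · linear_combination (((m1 - m3) * (m2 - m3))) * e1
        · ring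
        · linear_combination (((m1 - m2) * (m1 - m3))) * e3
        · ring
    · have hD : (m1 - m2) * (m2 - m3) * (m1 - m3) ≠ 0 := mul_ne_zero (mul_ne_zero (sub_ne_zero.mpr h12) (sub_ne_zero.mpr h23)) (sub_ne_zero.mpr h13)
      apply indep_aux _ _ _ 3 1 5
      simp [Matrix.cons_val_zero, Matrix.cons_val_one, Matrix.head_cons, Matrix.cons_val_two, Matrix.tail_cons, Matrix.cons_val_three, Matrix.cons_val_four, cons_val_five', Matrix.head_fin_const]
      intro hc
      exact hD (by linear_combination -hc)
  · -- case
    refine ⟨le_antisymm ?_ (span_le_ker _ _ _ _), ?_⟩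
    · intro v hv
      rw [LinearMap.mem_ker] at hv
      have e0 := congrFun hv 0
      have e1 := congrFun hv 1
      have e2 := congrFun hv 2
      have e3 := congrFun hv 3
      simp [Matrix.mulVecLin_apply, Matrix.mulVec, dotProduct,
        Fin.sum_univ_six, Pi.zero_apply, Matrix.cons_val_zero, Matrix.cons_val_one, Matrix.head_cons, Matrix.cons_val_two, Matrix.tail_cons, Matrix.cons_val_three, Matrix.cons_val_four, cons_val_five', Matrix.head_fin_const] at e0 e1 e2 e3
      refine mem_span_aux (D := (m1 - m2) * (m2 - m4) * (m1 - m4))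
        (A1 := ((-1) * m2 * m4 * m4 * v 3 + m2 * m2 * m4 * v 4 + m1 * m4 * m4 * v 3 + (-1) * m1 * m2 * m2 * v 4 + (-1) * m1 * m1 * m4 * v 0 + m1 * m1 * m2 * v 0))
        (A2 := (m4 * v 4 + (-1) * m4 * v 0 + (-1) * m2 * v 3 + m2 * v 0 + (-1) * m1 * v 4 + m1 * v 3))
        (A3 := ((-1) * m2 * m4 * v 4 + m2 * m4 * v 3 + (-1) * m1 * m4 * v 3 + m1 * m4 * v 0 + m1 * m2 * v 4 + (-1) * m1 * m2 * v 0))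
        ?_ ?_
      · exact mul_ne_zero (mul_ne_zero (sub_ne_zero.mpr h12) (sub_ne_zero.mpr h24)) (sub_ne_zero.mpr h14)
      · funext i
        fin_cases i <;>
          simp [Pi.smul_apply, Pi.add_apply, smul_eq_mul, Matrix.cons_val_zero, Matrix.cons_val_one, Matrix.head_cons, Matrix.cons_val_two, Matrix.tail_cons, Matrix.cons_val_three, Matrix.cons_val_four, cons_val_five', Matrix.head_fin_const]
        · ring
        · linear_combination (-((m1 - m2) * (m2 - m4))) * e2
        · linear_combination (((m1 - m4) * (m2 - m4))) * e0
        · ring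
        · ring
        · linear_combination (-((m1 - m2) * (m1 - m4))) * e3
    · have hD : (m1 - m2) * (m2 - m4) * (m1 - m4) ≠ 0 := mul_ne_zero (mul_ne_zero (sub_ne_zero.mpr h12) (sub_ne_zero.mpr h24)) (sub_ne_zero.mpr h14)
      apply indep_aux _ _ _ 3 0 4
      simp [Matrix.cons_val_zero, Matrix.cons_val_one, Matrix.head_cons, Matrix.cons_val_two, Matrix.tail_cons, Matrix.cons_val_three, Matrix.cons_val_four, cons_val_five', Matrix.head_fin_const]
      intro hc
      exact hD (by linear_combination -hc)
  · -- case
    refine ⟨le_antisymm ?_ (span_le_ker _ _ _ _), ?_⟩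
    · intro v hv
      rw [LinearMap.mem_ker] at hv
      have e0 := congrFun hv 0
      have e1 := congrFun hv 1
      have e2 := congrFun hv 2
      have e3 := congrFun hv 3
      simp [Matrix.mulVecLin_apply, Matrix.mulVec, dotProduct,
        Fin.sum_univ_six, Pi.zero_apply, Matrix.cons_val_zero, Matrix.cons_val_one, Matrix.head_cons, Matrix.cons_val_two, Matrix.tail_cons, Matrix.cons_val_three, Matrix.cons_val_four, cons_val_five', Matrix.head_fin_const] at e0 e1 e2 e3
      refine mem_span_aux (D := (m1 - m3) * (m3 - m4) * (m1 - m4))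
        (A1 := ((-1) * m3 * m4 * m4 * v 5 + m3 * m3 * m4 * v 4 + m1 * m4 * m4 * v 5 + (-1) * m1 * m3 * m3 * v 4 + (-1) * m1 * m1 * m4 * v 2 + m1 * m1 * m3 * v 2))
        (A2 := (m4 * v 4 + (-1) * m4 * v 2 + (-1) * m3 * v 5 + m3 * v 2 + m1 * v 5 + (-1) * m1 * v 4))
        (A3 := (m3 * m4 * v 5 + (-1) * m3 * m4 * v 4 + (-1) * m1 * m4 * v 5 + m1 * m4 * v 2 + m1 * m3 * v 4 + (-1) * m1 * m3 * v 2))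
        ?_ ?_
      · exact mul_ne_zero (mul_ne_zero (sub_ne_zero.mpr h13) (sub_ne_zero.mpr h34)) (sub_ne_zero.mpr h14)
      · funext i
        fin_cases i <;>
          simp [Pi.smul_apply, Pi.add_apply, smul_eq_mul, Matrix.cons_val_zero, Matrix.cons_val_one, Matrix.head_cons, Matrix.cons_val_two, Matrix.tail_cons, Matrix.cons_val_three, Matrix.cons_val_four, cons_val_five', Matrix.head_fin_const]
        · linear_combination (-((m1 - m4) * (m3 - m4))) * e0
        · linear_combination (-((m1 - m3) * (m3 - m4))) * e1
        · ring
        · linear_combination (((m1 - m3) * (m1 - m4))) * e3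
        · ring
        · ring
    · have hD : (m1 - m3) * (m3 - m4) * (m1 - m4) ≠ 0 := mul_ne_zero (mul_ne_zero (sub_ne_zero.mpr h13) (sub_ne_zero.mpr h34)) (sub_ne_zero.mpr h14)
      apply indep_aux _ _ _ 5 2 4
      simp [Matrix.cons_val_zero, Matrix.cons_val_one, Matrix.head_cons, Matrix.cons_val_two, Matrix.tail_cons, Matrix.cons_val_three, Matrix.cons_val_four, cons_val_five', Matrix.head_fin_const]
      intro hc
      exact hD (by linear_combination -hc)
  · -- case
    refine ⟨le_antisymm ?_ (span_le_ker _ _ _ _), ?_⟩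
    · intro v hv
      rw [LinearMap.mem_ker] at hv
      have e0 := congrFun hv 0
      have e1 := congrFun hv 1
      have e2 := congrFun hv 2
      have e3 := congrFun hv 3
      simp [Matrix.mulVecLin_apply, Matrix.mulVec, dotProduct,
        Fin.sum_univ_six, Pi.zero_apply, Matrix.cons_val_zero, Matrix.cons_val_one, Matrix.head_cons, Matrix.cons_val_two, Matrix.tail_cons, Matrix.cons_val_three, Matrix.cons_val_four, cons_val_five', Matrix.head_fin_const] at e0 e1 e2 e3
      refine mem_span_aux (D := (m2 - m3) * (m3 - m4) * (m2 - m4))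
        (A1 := ((-1) * m3 * m4 * m4 * v 1 + m3 * m3 * m4 * v 0 + m2 * m4 * m4 * v 1 + (-1) * m2 * m3 * m3 * v 0 + (-1) * m2 * m2 * m4 * v 2 + m2 * m2 * m3 * v 2))
        (A2 := ((-1) * m4 * v 2 + m4 * v 0 + m3 * v 2 + (-1) * m3 * v 1 + m2 * v 1 + (-1) * m2 * v 0))
        (A3 := (m3 * m4 * v 1 + (-1) * m3 * m4 * v 0 + m2 * m4 * v 2 + (-1) * m2 * m4 * v 1 + (-1) * m2 * m3 * v 2 + m2 * m3 * v 0))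
        ?_ ?_
      · exact mul_ne_zero (mul_ne_zero (sub_ne_zero.mpr h23) (sub_ne_zero.mpr h34)) (sub_ne_zero.mpr h24)
      · funext i
        fin_cases i <;>
          simp [Pi.smul_apply, Pi.add_apply, smul_eq_mul, Matrix.cons_val_zero, Matrix.cons_val_one, Matrix.head_cons, Matrix.cons_val_two, Matrix.tail_cons, Matrix.cons_val_three, Matrix.cons_val_four, cons_val_five', Matrix.head_fin_const]
        · ring
        · ring
        · ring
        · linear_combination (((m2 - m3) * (m2 - m4))) * e2
        · linear_combination (((m2 - m4) * (m3 - m4))) * e0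
        · linear_combination (((m2 - m3) * (m3 - m4))) * e1
    · have hD : (m2 - m3) * (m3 - m4) * (m2 - m4) ≠ 0 := mul_ne_zero (mul_ne_zero (sub_ne_zero.mpr h23) (sub_ne_zero.mpr h34)) (sub_ne_zero.mpr h24)
      apply indep_aux _ _ _ 1 0 2
      simp [Matrix.cons_val_zero, Matrix.cons_val_one, Matrix.head_cons, Matrix.cons_val_two, Matrix.tail_cons, Matrix.cons_val_three, Matrix.cons_val_four, cons_val_five', Matrix.head_fin_const]
      intro hc
      exact hD (by linear_combination hc)
  · -- case
    subst h12eq h34eq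
    refine ⟨le_antisymm ?_ (span_le_ker _ _ _ _), ?_⟩
    · intro v hv
      rw [LinearMap.mem_ker] at hv
      have e0 := congrFun hv 0
      have e1 := congrFun hv 1
      have e2 := congrFun hv 2
      have e3 := congrFun hv 3
      simp [Matrix.mulVecLin_apply, Matrix.mulVec, dotProduct,
        Fin.sum_univ_six, Pi.zero_apply, Matrix.cons_val_zero, Matrix.cons_val_one, Matrix.head_cons, Matrix.cons_val_two, Matrix.tail_cons, Matrix.cons_val_three, Matrix.cons_val_four, cons_val_five', Matrix.head_fin_const] at e0 e1 e2 e3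
      refine mem_span_aux (D := (m1 - m3) * (m1 - m3) * (m1 - m3))
        (A1 := ((-1) * m3 * m3 * m3 * v 3 + (2) * m1 * m3 * m3 * v 5 + m1 * m3 * m3 * v 3 + (-2) * m1 * m1 * m3 * v 5 + (-1) * m1 * m1 * m3 * v 2 + m1 * m1 * m1 * v 2))
        (A2 := ((2) * m3 * v 5 + (-1) * m3 * v 3 + (-1) * m3 * v 2 + (-2) * m1 * v 5 + m1 * v 3 + m1 * v 2))
        (A3 := ((-1) * m3 * m3 * v 5 + m3 * m3 * v 3 + (-1) * m1 * m3 * v 3 + m1 * m3 * v 2 + m1 * m1 * v 5 + (-1) * m1 * m1 * v 2))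
        ?_ ?_
      · exact mul_ne_zero (mul_ne_zero (sub_ne_zero.mpr h13) (sub_ne_zero.mpr h13)) (sub_ne_zero.mpr h13)
      · funext i
        fin_cases i <;>
          simp [Pi.smul_apply, Pi.add_apply, smul_eq_mul, Matrix.cons_val_zero, Matrix.cons_val_one, Matrix.head_cons, Matrix.cons_val_two, Matrix.tail_cons, Matrix.cons_val_three, Matrix.cons_val_four, cons_val_five', Matrix.head_fin_const]
        · linear_combination (-((m1 - m3) * (m1 - m3))) * e0 + (((m1 - m3) * (m1 - m3))) * e3
        · linear_combination (-((m1 - m3) * (m1 - m3))) * e1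
        · ring
        · ring
        · linear_combination (((m1 - m3) * (m1 - m3))) * e3
        · ring
    · have hD : (m1 - m3) * (m1 - m3) * (m1 - m3) ≠ 0 := mul_ne_zero (mul_ne_zero (sub_ne_zero.mpr h13) (sub_ne_zero.mpr h13)) (sub_ne_zero.mpr h13)
      apply indep_aux _ _ _ 3 2 5
      simp [Matrix.cons_val_zero, Matrix.cons_val_one, Matrix.head_cons, Matrix.cons_val_two, Matrix.tail_cons, Matrix.cons_val_three, Matrix.cons_val_four, cons_val_five', Matrix.head_fin_const]
      intro hc
      exact hD (by linear_combination -hc)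
  · -- case
    subst h13eq h24eq
    refine ⟨le_antisymm ?_ (span_le_ker _ _ _ _), ?_⟩
    · intro v hv
      rw [LinearMap.mem_ker] at hv
      have e0 := congrFun hv 0
      have e1 := congrFun hv 1
      have e2 := congrFun hv 2
      have e3 := congrFun hv 3
      simp [Matrix.mulVecLin_apply, Matrix.mulVec, dotProduct,
        Fin.sum_univ_six, Pi.zero_apply, Matrix.cons_val_zero, Matrix.cons_val_one, Matrix.head_cons, Matrix.cons_val_two, Matrix.tail_cons, Matrix.cons_val_three, Matrix.cons_val_four, cons_val_five', Matrix.head_fin_const] at e0 e1 e2 e3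
      refine mem_span_aux (D := (m1 - m2) * (m1 - m2) * (m1 - m2))
        (A1 := ((-1) * m2 * m2 * m2 * v 5 + m1 * m2 * m2 * v 5 + (2) * m1 * m2 * m2 * v 3 + (-2) * m1 * m1 * m2 * v 3 + (-1) * m1 * m1 * m2 * v 0 + m1 * m1 * m1 * v 0))
        (A2 := ((-1) * m2 * v 5 + (2) * m2 * v 3 + (-1) * m2 * v 0 + m1 * v 5 + (-2) * m1 * v 3 + m1 * v 0))
        (A3 := (m2 * m2 * v 5 + (-1) * m2 * m2 * v 3 + (-1) * m1 * m2 * v 5 + m1 * m2 * v 0 + m1 * m1 * v 3 + (-1) * m1 * m1 * v 0))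
        ?_ ?_
      · exact mul_ne_zero (mul_ne_zero (sub_ne_zero.mpr h12) (sub_ne_zero.mpr h12)) (sub_ne_zero.mpr h12)
      · funext i
        fin_cases i <;>
          simp [Pi.smul_apply, Pi.add_apply, smul_eq_mul, Matrix.cons_val_zero, Matrix.cons_val_one, Matrix.head_cons, Matrix.cons_val_two, Matrix.tail_cons, Matrix.cons_val_three, Matrix.cons_val_four, cons_val_five', Matrix.head_fin_const]
        · ring
        · linear_combination (-((m1 - m2) * (m1 - m2))) * e2
        · linear_combination (((m1 - m2) * (m1 - m2))) * e0 + (-((m1 - m2) * (m1 - m2))) * e3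
        · ring
        · linear_combination (-((m1 - m2) * (m1 - m2))) * e3
        · ring
    · have hD : (m1 - m2) * (m1 - m2) * (m1 - m2) ≠ 0 := mul_ne_zero (mul_ne_zero (sub_ne_zero.mpr h12) (sub_ne_zero.mpr h12)) (sub_ne_zero.mpr h12)
      apply indep_aux _ _ _ 5 0 3
      simp [Matrix.cons_val_zero, Matrix.cons_val_one, Matrix.head_cons, Matrix.cons_val_two, Matrix.tail_cons, Matrix.cons_val_three, Matrix.cons_val_four, cons_val_five', Matrix.head_fin_const]
      intro hc
      exact hD (by linear_combination -hc)
  · -- case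
    subst h14eq h23eq
    refine ⟨le_antisymm ?_ (span_le_ker _ _ _ _), ?_⟩
    · intro v hv
      rw [LinearMap.mem_ker] at hv
      have e0 := congrFun hv 0
      have e1 := congrFun hv 1
      have e2 := congrFun hv 2
      have e3 := congrFun hv 3
      simp [Matrix.mulVecLin_apply, Matrix.mulVec, dotProduct,
        Fin.sum_univ_six, Pi.zero_apply, Matrix.cons_val_zero, Matrix.cons_val_one, Matrix.head_cons, Matrix.cons_val_two, Matrix.tail_cons, Matrix.cons_val_three, Matrix.cons_val_four, cons_val_five', Matrix.head_fin_const] at e0 e1 e2 e3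
      refine mem_span_aux (D := (m1 - m2) * (m1 - m2) * (m1 - m2))
        (A1 := ((-1) * m2 * m2 * m2 * v 4 + m1 * m2 * m2 * v 4 + (2) * m1 * m2 * m2 * v 3 + (-2) * m1 * m1 * m2 * v 3 + (-1) * m1 * m1 * m2 * v 1 + m1 * m1 * m1 * v 1))
        (A2 := ((-1) * m2 * v 4 + (2) * m2 * v 3 + (-1) * m2 * v 1 + m1 * v 4 + (-2) * m1 * v 3 + m1 * v 1))
        (A3 := (m2 * m2 * v 4 + (-1) * m2 * m2 * v 3 + (-1) * m1 * m2 * v 4 + m1 * m2 * v 1 + m1 * m1 * v 3 + (-1) * m1 * m1 * v 1))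
        ?_ ?_
      · exact mul_ne_zero (mul_ne_zero (sub_ne_zero.mpr h12) (sub_ne_zero.mpr h12)) (sub_ne_zero.mpr h12)
      · funext i
        fin_cases i <;>
          simp [Pi.smul_apply, Pi.add_apply, smul_eq_mul, Matrix.cons_val_zero, Matrix.cons_val_one, Matrix.head_cons, Matrix.cons_val_two, Matrix.tail_cons, Matrix.cons_val_three, Matrix.cons_val_four, cons_val_five', Matrix.head_fin_const]
        · linear_combination (((m1 - m2) * (m1 - m2))) * e2
        · ring
        · linear_combination (((m1 - m2) * (m1 - m2))) * e0 + (((m1 - m2) * (m1 - m2))) * e2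
        · ring
        · ring
        · linear_combination (((m1 - m2) * (m1 - m2))) * e3
    · have hD : (m1 - m2) * (m1 - m2) * (m1 - m2) ≠ 0 := mul_ne_zero (mul_ne_zero (sub_ne_zero.mpr h12) (sub_ne_zero.mpr h12)) (sub_ne_zero.mpr h12)
      apply indep_aux _ _ _ 1 4 3
      simp [Matrix.cons_val_zero, Matrix.cons_val_one, Matrix.head_cons, Matrix.cons_val_two, Matrix.tail_cons, Matrix.cons_val_three, Matrix.cons_val_four, cons_val_five', Matrix.head_fin_const]
      intro hc
      exact hD (by linear_combination hc)
end

section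
/- Let m1, m2, m3, m4 be positive real numbers and E(x) = (m1+m2+m3+m4)x³ + 2(m1m2+m1m3+m1m4+m2m3+m2m4+m3m4)x² + 3(m1m2m3+m1m2m4+m1m3m4+m2m3m4)x + 4m1m2m3m4. Then E has three real roots, all strictly negative: there exist real numbers r₁, r₂, r₃ < 0 such that E(x) = (m1+m2+m3+m4)(x−r₁)(x−r₂)(x−r₃) for all x. -/
/-- The conclusion of the theorem, as a predicate on the four masses. -/
abbrev Concl (m1 m2 m3 m4 : ℝ) : Prop :=
  ∃ r1 r2 r3 : ℝ, r1 < 0 ∧ r2 < 0 ∧ r3 < 0 ∧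
    ∀ x : ℝ,
      (m1 + m2 + m3 + m4) * x ^ 3
        + 2 * (m1 * m2 + m1 * m3 + m1 * m4 + m2 * m3 + m2 * m4 + m3 * m4) * x ^ 2
        + 3 * (m1 * m2 * m3 + m1 * m2 * m4 + m1 * m3 * m4 + m2 * m3 * m4) * x
        + 4 * (m1 * m2 * m3 * m4)
      = (m1 + m2 + m3 + m4) * (x - r1) * (x - r2) * (x - r3)

/-- The conclusion only depends on the elementary symmetric functions of the masses. -/
lemma transfer {a b c d m1 m2 m3 m4 : ℝ}
    (H : Concl a b c d)
    (e1 : a + b + c + d = m1 + m2 + m3 + m4)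
    (e2 : a*b + a*c + a*d + b*c + b*d + c*d
        = m1*m2 + m1*m3 + m1*m4 + m2*m3 + m2*m4 + m3*m4)
    (e3 : a*b*c + a*b*d + a*c*d + b*c*d
        = m1*m2*m3 + m1*m2*m4 + m1*m3*m4 + m2*m3*m4)
    (e4 : a*b*c*d = m1*m2*m3*m4) : Concl m1 m2 m3 m4 := by
  obtain ⟨r1, r2, r3, hr1, hr2, hr3, hx⟩ := H
  refine ⟨r1, r2, r3, hr1, hr2, hr3, fun x => ?_⟩
  linear_combination hx x - (x^3 - (x - r1)*(x - r2)*(x - r3)) * e1 - 2*x^2 * e2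
    - 3*x * e3 - 4 * e4

/-- Case of a triple mass (m, m, m, M). -/
lemma L_triple (m M : ℝ) (hm : 0 < m) (hM : 0 < M) : Concl m m m M := by
  have hden : (0:ℝ) < 3*m + M := by linarith
  refine ⟨-m, -m, -(4*m*M)/(3*m+M), by linarith, by linarith, ?_, fun x => ?_⟩
  · apply div_neg_of_neg_of_pos _ hden; nlinarith
  · have hr : (3*m+M) * (-(4*m*M)/(3*m+M)) = -(4*m*M) := by field_simp
    linear_combination (x+m)^2 * hr

/-- Case of two double masses (m, m, M, M). -/
lemma L_twopairs (m M : ℝ) (hm : 0 < m) (hM : 0 < M) : Concl m m M M := by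
  have hden : (0:ℝ) < m + M := by linarith
  refine ⟨-m, -M, -(2*m*M)/(m+M), by linarith, by linarith, ?_, fun x => ?_⟩
  · apply div_neg_of_neg_of_pos _ hden; nlinarith
  · have hr : (m+M) * (-(2*m*M)/(m+M)) = -(2*m*M) := by field_simp
    linear_combination 2*(x+m)*(x+M) * hr

/-- The quadratic factor in the double-mass case. -/
def Qp (m b c x : ℝ) : ℝ := 2*m*(x+b)*(x+c) + b*(x+m)*(x+c) + c*(x+m)*(x+b)

/-- Two distinct negative roots of the quadratic factor. -/
lemma quad_roots (m b c μ L : ℝ) (hm : 0 < m) (hb : 0 < b) (hc : 0 < c)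
    (hμ : 0 < μ) (hμL : μ ≤ L)
    (hQL : 0 < Qp m b c (-L)) (hQμ : Qp m b c (-μ) < 0) :
    ∃ u v : ℝ, u < 0 ∧ v < 0 ∧ u ≠ v ∧ Qp m b c u = 0 ∧ Qp m b c v = 0 := by
  have hcont : Continuous (Qp m b c) := by unfold Qp; fun_prop
  have hQ0 : 0 < Qp m b c 0 := by
    rw [show Qp m b c 0 = 4*(m*b*c) from by unfold Qp; ring]; positivity
  obtain ⟨u, huI, hu0⟩ := intermediate_value_Icc' (by linarith : -L ≤ -μ)
    hcont.continuousOn ⟨le_of_lt hQμ, le_of_lt hQL⟩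
  obtain ⟨v, hvI, hv0⟩ := intermediate_value_Icc (by linarith : -μ ≤ (0:ℝ))
    hcont.continuousOn ⟨le_of_lt hQμ, le_of_lt hQ0⟩
  have hu' : u < -μ := lt_of_le_of_ne huI.2 (fun h => by rw [h] at hu0; linarith)
  have hv' : v < 0 := lt_of_le_of_ne hvI.2 (fun h => by rw [h] at hv0; linarith)
  exact ⟨u, v, by linarith, hv', by have := hvI.1; exact ne_of_lt (by linarith), hu0, hv0⟩

/-- Case of one double mass (m, m, b, c) with b, c, m pairwise distinct, b < c. -/
lemma L_pair (m b c : ℝ) (hm : 0 < m) (hb : 0 < b) (hc : 0 < c)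
    (hbc : b < c) (hmb : m ≠ b) (hmc : m ≠ c) : Concl m m b c := by
  have key : ∃ u v : ℝ, u < 0 ∧ v < 0 ∧ u ≠ v ∧ Qp m b c u = 0 ∧ Qp m b c v = 0 := by
    rcases lt_or_gt_of_ne hmb with h | h
    · -- m < b < c : L = c, μ = b
      refine quad_roots m b c b c hm hb hc hb (le_of_lt hbc) ?_ ?_
      · rw [show Qp m b c (-c) = c*((m-c)*(b-c)) from by unfold Qp; ring]
        exact mul_pos hc (mul_pos_of_neg_of_neg (by linarith) (by linarith))
      · rw [show Qp m b c (-b) = b*((m-b)*(c-b)) from by unfold Qp; ring]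
        exact mul_neg_of_pos_of_neg hb (mul_neg_of_neg_of_pos (by linarith) (by linarith))
    · rcases lt_or_gt_of_ne hmc with h2 | h2
      · -- b < m < c : L = c, μ = m
        refine quad_roots m b c m c hm hb hc hm (le_of_lt h2) ?_ ?_
        · rw [show Qp m b c (-c) = c*((m-c)*(b-c)) from by unfold Qp; ring]
          exact mul_pos hc (mul_pos_of_neg_of_neg (by linarith) (by linarith))
        · rw [show Qp m b c (-m) = 2*m*((b-m)*(c-m)) from by unfold Qp; ring]
          exact mul_neg_of_pos_of_neg (by linarith) (mul_neg_of_neg_of_pos (by linarith) (by linarith))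
      · -- b < c < m : L = m, μ = c
        refine quad_roots m b c c m hm hb hc hc (le_of_lt h2) ?_ ?_
        · rw [show Qp m b c (-m) = 2*m*((b-m)*(c-m)) from by unfold Qp; ring]
          exact mul_pos (by linarith) (mul_pos_of_neg_of_neg (by linarith) (by linarith))
        · rw [show Qp m b c (-c) = c*((m-c)*(b-c)) from by unfold Qp; ring]
          exact mul_neg_of_pos_of_neg hc (mul_neg_of_pos_of_neg (by linarith) (by linarith))
  obtain ⟨u, v, hu, hv, huv, hQu, hQv⟩ := key
  have huv' : u - v ≠ 0 := sub_ne_zero.mpr huv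
  unfold Qp at hQu hQv
  have hfac : ∀ x : ℝ, 2*m*(x+b)*(x+c) + b*(x+m)*(x+c) + c*(x+m)*(x+b)
      = (2*m+b+c)*(x-u)*(x-v) := by
    intro x
    have hk : (u - v) * ((2*m*(x+b)*(x+c) + b*(x+m)*(x+c) + c*(x+m)*(x+b))
        - (2*m+b+c)*(x-u)*(x-v)) = 0 := by
      linear_combination (x-v) * hQu - (x-u) * hQv
    rcases mul_eq_zero.mp hk with h | h
    · exact absurd h huv'
    · linarith
  refine ⟨-m, u, v, by linarith, hu, hv, fun x => ?_⟩
  linear_combination (x+m) * hfac x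

/-- Case of four pairwise distinct masses. -/
lemma L_distinct (m1 m2 m3 m4 : ℝ) (h1 : 0 < m1) (h2 : 0 < m2) (h3 : 0 < m3) (h4 : 0 < m4)
    (o12 : m1 < m2) (o23 : m2 < m3) (o34 : m3 < m4) : Concl m1 m2 m3 m4 := by
  set f : ℝ → ℝ := fun x =>
      (m1 + m2 + m3 + m4) * x ^ 3
        + 2 * (m1 * m2 + m1 * m3 + m1 * m4 + m2 * m3 + m2 * m4 + m3 * m4) * x ^ 2
        + 3 * (m1 * m2 * m3 + m1 * m2 * m4 + m1 * m3 * m4 + m2 * m3 * m4) * x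
        + 4 * (m1 * m2 * m3 * m4) with hf
  have hcont : Continuous f := by rw [hf]; fun_prop
  have hA : 0 < f (-m1) := by
    rw [show f (-m1) = m1*((m2-m1)*((m3-m1)*(m4-m1))) from by rw [hf]; ring]
    exact mul_pos h1 (mul_pos (by linarith) (mul_pos (by linarith) (by linarith)))
  have hB : f (-m2) < 0 := by
    rw [show f (-m2) = m2*((m1-m2)*((m3-m2)*(m4-m2))) from by rw [hf]; ring]
    exact mul_neg_of_pos_of_neg h2 (mul_neg_of_neg_of_pos (by linarith)
      (mul_pos (by linarith) (by linarith)))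
  have hC : 0 < f (-m3) := by
    rw [show f (-m3) = m3*(((m1-m3)*(m2-m3))*(m4-m3)) from by rw [hf]; ring]
    exact mul_pos h3 (mul_pos (mul_pos_of_neg_of_neg (by linarith) (by linarith)) (by linarith))
  have hD : f (-m4) < 0 := by
    rw [show f (-m4) = m4*(((m1-m4)*(m2-m4))*(m3-m4)) from by rw [hf]; ring]
    exact mul_neg_of_pos_of_neg h4 (mul_neg_of_pos_of_neg
      (mul_pos_of_neg_of_neg (by linarith) (by linarith)) (by linarith))
  obtain ⟨r1, hr1I, hr1⟩ := intermediate_value_Icc (by linarith : -m4 ≤ -m3)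
    hcont.continuousOn ⟨le_of_lt hD, le_of_lt hC⟩
  obtain ⟨r2, hr2I, hr2⟩ := intermediate_value_Icc' (by linarith : -m3 ≤ -m2)
    hcont.continuousOn ⟨le_of_lt hB, le_of_lt hC⟩
  obtain ⟨r3, hr3I, hr3⟩ := intermediate_value_Icc (by linarith : -m2 ≤ -m1)
    hcont.continuousOn ⟨le_of_lt hB, le_of_lt hA⟩
  have h12' : r1 < r2 := by
    have hne : r1 < -m3 := lt_of_le_of_ne hr1I.2 (fun h => by rw [h] at hr1; linarith)
    linarith [hr2I.1]
  have h23' : r2 < r3 := by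
    have hne : r2 < -m2 := lt_of_le_of_ne hr2I.2 (fun h => by rw [h] at hr2; linarith)
    linarith [hr3I.1]
  have hD0 : (r1 - r2) * ((r1 - r3) * (r2 - r3)) ≠ 0 := by
    refine mul_ne_zero (by intro h; nlinarith) (mul_ne_zero (by intro h; nlinarith)
      (by intro h; nlinarith))
  refine ⟨r1, r2, r3, by linarith [hr1I.2], by linarith [hr2I.2], by linarith [hr3I.2],
    fun x => ?_⟩
  rw [hf] at hr1 hr2 hr3
  have hk : (r1 - r2) * ((r1 - r3) * (r2 - r3)) *
      (((m1 + m2 + m3 + m4) * x ^ 3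
        + 2 * (m1 * m2 + m1 * m3 + m1 * m4 + m2 * m3 + m2 * m4 + m3 * m4) * x ^ 2
        + 3 * (m1 * m2 * m3 + m1 * m2 * m4 + m1 * m3 * m4 + m2 * m3 * m4) * x
        + 4 * (m1 * m2 * m3 * m4))
      - (m1 + m2 + m3 + m4) * (x - r1) * (x - r2) * (x - r3)) = 0 := by
    linear_combination ((r2-r3)*(x-r2)*(x-r3)) * hr1 - ((r1-r3)*(x-r1)*(x-r3)) * hr2
      + ((r1-r2)*(x-r1)*(x-r2)) * hr3
  rcases mul_eq_zero.mp hk with h | h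
  · exact absurd h hD0
  · linarith

/-- Sorted case. -/
lemma aux_sorted (a b c d : ℝ) (ha : 0 < a) (hb : 0 < b) (hc : 0 < c) (hd : 0 < d)
    (hab : a ≤ b) (hbc : b ≤ c) (hcd : c ≤ d) : Concl a b c d := by
  rcases eq_or_lt_of_le hab with h | h
  · subst h
    rcases eq_or_lt_of_le hcd with h2 | h2
    · subst h2
      exact L_twopairs a c ha hc
    · rcases eq_or_lt_of_le hbc with h3 | h3
      · subst h3
        exact L_triple a d ha hd
      · exact L_pair a c d ha hc hd h2 (ne_of_lt h3) (ne_of_lt (lt_trans h3 h2))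
  · rcases eq_or_lt_of_le hbc with h2 | h2
    · subst h2
      rcases eq_or_lt_of_le hcd with h3 | h3
      · subst h3
        exact transfer (L_triple b a hb ha) (by ring) (by ring) (by ring) (by ring)
      · exact transfer (L_pair b a d hb ha hd (lt_trans h h3) (ne_of_gt h) (ne_of_lt h3))
          (by ring) (by ring) (by ring) (by ring)
    · rcases eq_or_lt_of_le hcd with h3 | h3
      · subst h3
        exact transfer (L_pair c a b hc ha hb h (ne_of_gt (lt_trans h h2)) (ne_of_gt h2))
          (by ring) (by ring) (by ring) (by ring)
      · exact L_distinct a b c d ha hb hc hd h h2 h3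

set_option maxHeartbeats 2000000 in
lemma main_aux (m1 m2 m3 m4 : ℝ)
    (h1 : 0 < m1) (h2 : 0 < m2) (h3 : 0 < m3) (h4 : 0 < m4) : Concl m1 m2 m3 m4 := by
  have T : ∀ a b c d : ℝ, 0 < a → 0 < b → 0 < c → 0 < d → a ≤ b → b ≤ c → c ≤ d →
      Concl a b c d := aux_sorted
  rcases le_total m1 m2 with h12 | h12 <;>
  rcases le_total m1 m3 with h13 | h13 <;>
  rcases le_total m1 m4 with h14 | h14 <;>
  rcases le_total m2 m3 with h23 | h23 <;>
  rcases le_total m2 m4 with h24 | h24 <;>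
  rcases le_total m3 m4 with h34 | h34 <;>
  first
    | exact transfer (T m1 m2 m3 m4 (by assumption) (by assumption) (by assumption) (by assumption) (by assumption) (by assumption) (by assumption)) (by ring) (by ring) (by ring) (by ring)
    | exact transfer (T m1 m2 m4 m3 (by assumption) (by assumption) (by assumption) (by assumption) (by assumption) (by assumption) (by assumption)) (by ring) (by ring) (by ring) (by ring)
    | exact transfer (T m1 m3 m2 m4 (by assumption) (by assumption) (by assumption) (by assumption) (by assumption) (by assumption) (by assumption)) (by ring) (by ring) (by ring) (by ring)
    | exact transfer (T m1 m3 m4 m2 (by assumption) (by assumption) (by assumption) (by assumption) (by assumption) (by assumption) (by assumption)) (by ring) (by ring) (by ring) (by ring)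
    | exact transfer (T m1 m4 m2 m3 (by assumption) (by assumption) (by assumption) (by assumption) (by assumption) (by assumption) (by assumption)) (by ring) (by ring) (by ring) (by ring)
    | exact transfer (T m1 m4 m3 m2 (by assumption) (by assumption) (by assumption) (by assumption) (by assumption) (by assumption) (by assumption)) (by ring) (by ring) (by ring) (by ring)
    | exact transfer (T m2 m1 m3 m4 (by assumption) (by assumption) (by assumption) (by assumption) (by assumption) (by assumption) (by assumption)) (by ring) (by ring) (by ring) (by ring)
    | exact transfer (T m2 m1 m4 m3 (by assumption) (by assumption) (by assumption) (by assumption) (by assumption) (by assumption) (by assumption)) (by ring) (by ring) (by ring) (by ring)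
    | exact transfer (T m2 m3 m1 m4 (by assumption) (by assumption) (by assumption) (by assumption) (by assumption) (by assumption) (by assumption)) (by ring) (by ring) (by ring) (by ring)
    | exact transfer (T m2 m3 m4 m1 (by assumption) (by assumption) (by assumption) (by assumption) (by assumption) (by assumption) (by assumption)) (by ring) (by ring) (by ring) (by ring)
    | exact transfer (T m2 m4 m1 m3 (by assumption) (by assumption) (by assumption) (by assumption) (by assumption) (by assumption) (by assumption)) (by ring) (by ring) (by ring) (by ring)
    | exact transfer (T m2 m4 m3 m1 (by assumption) (by assumption) (by assumption) (by assumption) (by assumption) (by assumption) (by assumption)) (by ring) (by ring) (by ring) (by ring)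
    | exact transfer (T m3 m1 m2 m4 (by assumption) (by assumption) (by assumption) (by assumption) (by assumption) (by assumption) (by assumption)) (by ring) (by ring) (by ring) (by ring)
    | exact transfer (T m3 m1 m4 m2 (by assumption) (by assumption) (by assumption) (by assumption) (by assumption) (by assumption) (by assumption)) (by ring) (by ring) (by ring) (by ring)
    | exact transfer (T m3 m2 m1 m4 (by assumption) (by assumption) (by assumption) (by assumption) (by assumption) (by assumption) (by assumption)) (by ring) (by ring) (by ring) (by ring)
    | exact transfer (T m3 m2 m4 m1 (by assumption) (by assumption) (by assumption) (by assumption) (by assumption) (by assumption) (by assumption)) (by ring) (by ring) (by ring) (by ring)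
    | exact transfer (T m3 m4 m1 m2 (by assumption) (by assumption) (by assumption) (by assumption) (by assumption) (by assumption) (by assumption)) (by ring) (by ring) (by ring) (by ring)
    | exact transfer (T m3 m4 m2 m1 (by assumption) (by assumption) (by assumption) (by assumption) (by assumption) (by assumption) (by assumption)) (by ring) (by ring) (by ring) (by ring)
    | exact transfer (T m4 m1 m2 m3 (by assumption) (by assumption) (by assumption) (by assumption) (by assumption) (by assumption) (by assumption)) (by ring) (by ring) (by ring) (by ring)
    | exact transfer (T m4 m1 m3 m2 (by assumption) (by assumption) (by assumption) (by assumption) (by assumption) (by assumption) (by assumption)) (by ring) (by ring) (by ring) (by ring)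
    | exact transfer (T m4 m2 m1 m3 (by assumption) (by assumption) (by assumption) (by assumption) (by assumption) (by assumption) (by assumption)) (by ring) (by ring) (by ring) (by ring)
    | exact transfer (T m4 m2 m3 m1 (by assumption) (by assumption) (by assumption) (by assumption) (by assumption) (by assumption) (by assumption)) (by ring) (by ring) (by ring) (by ring)
    | exact transfer (T m4 m3 m1 m2 (by assumption) (by assumption) (by assumption) (by assumption) (by assumption) (by assumption) (by assumption)) (by ring) (by ring) (by ring) (by ring)
    | exact transfer (T m4 m3 m2 m1 (by assumption) (by assumption) (by assumption) (by assumption) (by assumption) (by assumption) (by assumption)) (by ring) (by ring) (by ring) (by ring)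

/-- The cubic E has three real roots, all strictly negative. -/
theorem E_has_three_negative_roots (m1 m2 m3 m4 : ℝ)
    (h1 : 0 < m1) (h2 : 0 < m2) (h3 : 0 < m3) (h4 : 0 < m4) :
    ∃ r1 r2 r3 : ℝ, r1 < 0 ∧ r2 < 0 ∧ r3 < 0 ∧
      ∀ x : ℝ,
        (m1 + m2 + m3 + m4) * x ^ 3
          + 2 * (m1 * m2 + m1 * m3 + m1 * m4 + m2 * m3 + m2 * m4 + m3 * m4) * x ^ 2
          + 3 * (m1 * m2 * m3 + m1 * m2 * m4 + m1 * m3 * m4 + m2 * m3 * m4) * x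
          + 4 * (m1 * m2 * m3 * m4)
        = (m1 + m2 + m3 + m4) * (x - r1) * (x - r2) * (x - r3) := by
  exact main_aux m1 m2 m3 m4 h1 h2 h3 h4
end

section
/- Let m1, m2, m3 be real numbers and let φ: ℝ → ℝ be differentiable at 1. Define G(a, b, d, f) = m1(d−b−a)(φ(b)−φ(a)) − m2(d+b)(φ(d)−φ(f)) + m3(b−a−d)(φ(a)−φ(d)) − m2(b+d)(φ(f)−φ(b)) + m2(a−d−b)(φ(d)−φ(b)) − m2(a+f)(φ(b)−φ(d)). Then (i) G(l, l, l, l) = 0 for every real l, and (ii) the gradient of G at the point (1, 1, 1, 1) equals φ′(1)·(m1−m3, m2−m1, m3−m2, 0). In particular, if φ′(1) ≠ 0 and the three numbers m1, m2, m3 are not all equal, then G is a submersion at (1, 1, 1, 1). -/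
/-- The single equation G = 0 of Z/2Z-symmetric balanced configurations vanishes on
the diagonal, and its gradient at the regular tetrahedron (1,1,1,1) is
φ′(1)·(m1−m3, m2−m1, m3−m2, 0); in particular G is a submersion there as soon as
φ′(1) ≠ 0 and m1, m2, m3 are not all equal. -/
theorem symmetric_balanced_equation_submersion
    (m1 m2 m3 : ℝ) (φ : ℝ → ℝ) (φ' : ℝ) (hφ : HasDerivAt φ φ' 1) :
    let G : ℝ → ℝ → ℝ → ℝ → ℝ := fun a b d f =>
      m1 * (d - b - a) * (φ b - φ a) - m2 * (d + b) * (φ d - φ f)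
        + m3 * (b - a - d) * (φ a - φ d) - m2 * (b + d) * (φ f - φ b)
        + m2 * (a - d - b) * (φ d - φ b) - m2 * (a + f) * (φ b - φ d)
    let pa : ℝ × ℝ × ℝ × ℝ →L[ℝ] ℝ := ContinuousLinearMap.fst ℝ ℝ (ℝ × ℝ × ℝ)
    let pb : ℝ × ℝ × ℝ × ℝ →L[ℝ] ℝ :=
      (ContinuousLinearMap.fst ℝ ℝ (ℝ × ℝ)).comp (ContinuousLinearMap.snd ℝ ℝ (ℝ × ℝ × ℝ))
    let pd : ℝ × ℝ × ℝ × ℝ →L[ℝ] ℝ :=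
      (ContinuousLinearMap.fst ℝ ℝ ℝ).comp
        ((ContinuousLinearMap.snd ℝ ℝ (ℝ × ℝ)).comp (ContinuousLinearMap.snd ℝ ℝ (ℝ × ℝ × ℝ)))
    let pf : ℝ × ℝ × ℝ × ℝ →L[ℝ] ℝ :=
      (ContinuousLinearMap.snd ℝ ℝ ℝ).comp
        ((ContinuousLinearMap.snd ℝ ℝ (ℝ × ℝ)).comp (ContinuousLinearMap.snd ℝ ℝ (ℝ × ℝ × ℝ)))
    let L : ℝ × ℝ × ℝ × ℝ →L[ℝ] ℝ :=
      (φ' * (m1 - m3)) • pa + (φ' * (m2 - m1)) • pb + (φ' * (m3 - m2)) • pd + (φ' * 0) • pf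
    (∀ l : ℝ, G l l l l = 0) ∧
    HasFDerivAt (fun p : ℝ × ℝ × ℝ × ℝ => G p.1 p.2.1 p.2.2.1 p.2.2.2) L (1, 1, 1, 1) ∧
    (φ' ≠ 0 → ¬(m1 = m2 ∧ m2 = m3) → Function.Surjective ⇑L) := by
  intro G pa pb pd pf L
  have ha : HasFDerivAt (fun p : ℝ × ℝ × ℝ × ℝ => p.1) pa (1,1,1,1) := pa.hasFDerivAt
  have hb : HasFDerivAt (fun p : ℝ × ℝ × ℝ × ℝ => p.2.1) pb (1,1,1,1) := pb.hasFDerivAt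
  have hd : HasFDerivAt (fun p : ℝ × ℝ × ℝ × ℝ => p.2.2.1) pd (1,1,1,1) := pd.hasFDerivAt
  have hf : HasFDerivAt (fun p : ℝ × ℝ × ℝ × ℝ => p.2.2.2) pf (1,1,1,1) := pf.hasFDerivAt
  have hφa : HasFDerivAt (fun p : ℝ × ℝ × ℝ × ℝ => φ p.1) (φ' • pa) (1,1,1,1) :=
    hφ.comp_hasFDerivAt (1,1,1,1) ha
  have hφb : HasFDerivAt (fun p : ℝ × ℝ × ℝ × ℝ => φ p.2.1) (φ' • pb) (1,1,1,1) :=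
    hφ.comp_hasFDerivAt (1,1,1,1) hb
  have hφd : HasFDerivAt (fun p : ℝ × ℝ × ℝ × ℝ => φ p.2.2.1) (φ' • pd) (1,1,1,1) :=
    hφ.comp_hasFDerivAt (1,1,1,1) hd
  have hφf : HasFDerivAt (fun p : ℝ × ℝ × ℝ × ℝ => φ p.2.2.2) (φ' • pf) (1,1,1,1) :=
    hφ.comp_hasFDerivAt (1,1,1,1) hf
  have H := (((((((hd.sub hb).sub ha).const_mul m1).mul (hφb.sub hφa)).sub
      ((((hd.add hb).const_mul m2).mul (hφd.sub hφf)))).add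
      ((((hb.sub ha).sub hd).const_mul m3).mul (hφa.sub hφd))).sub
      ((((hb.add hd).const_mul m2).mul (hφf.sub hφb)))).add
      ((((ha.sub hd).sub hb).const_mul m2).mul (hφd.sub hφb)) |>.sub
      ((((ha.add hf).const_mul m2).mul (hφb.sub hφd)))
  refine ⟨fun l => by simp [G], ?_, ?_⟩
  · refine H.congr_fderiv ?_
    refine ContinuousLinearMap.ext fun v => ?_
    simp [L, pa, pb, pd, pf]
    ring
  · intro hφ' hm x
    by_cases h12 : m1 = m2
    · have h23 : m2 ≠ m3 := fun h => hm ⟨h12, h⟩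
      refine ⟨(0, 0, x / (φ' * (m3 - m2)), 0), ?_⟩
      have : φ' * (m3 - m2) ≠ 0 := mul_ne_zero hφ' (sub_ne_zero.mpr (Ne.symm h23))
      simp [L, pa, pb, pd, pf]
      field_simp
    · refine ⟨(0, x / (φ' * (m2 - m1)), 0, 0), ?_⟩
      have : φ' * (m2 - m1) ≠ 0 := mul_ne_zero hφ' (sub_ne_zero.mpr (Ne.symm h12))
      simp [L, pa, pb, pd, pf]
      field_simp
end
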